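/- arXiv:2105.09194 — 6 statements merged into one kernel-verified Lean document; each statement's English description precedes it below -/
import Mathlib

section
/- Let r ≥ 3 and α > 0, and let G be an n-vertex graph with minimum degree at least ((2r−5)/(2r−3)+α)·n. Then there exists a constant c_r > 0 depending only on r such that every copy of K_r in G contains an edge that lies in at least c_r·α·n^{r−2} copies of K_r. -/
open Finset SimpleGraph
open scoped Classical

set_option linter.unusedSectionVars false
set_option linter.unusedVariables false
set_option maxHeartbeats 1000000

section PELhelpers


lemma arith_key (P α M N D : ℝ) (hP : 0 < P) (ha : 0 < α) (hN : 0 ≤ N) (h1 : α * (P+2) < 2)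
    (h2 : (P/(P+2) + α) * N ≤ D) (h3 : D ≤ M) (h4 : M ≤ N) :
    ((P-2)/P + α) * M ≤ M + D - N := by
  have hQ : (0:ℝ) < P + 2 := by linarith
  have h2' : (P + α*(P+2)) * N ≤ D * (P+2) := by
    calc (P + α*(P+2)) * N = (P/(P+2) + α) * N * (P+2) := by field_simp
    _ ≤ D * (P+2) := mul_le_mul_of_nonneg_right h2 hQ.le
  rw [div_add' _ _ _ hP.ne', div_mul_eq_mul_div, div_le_iff₀ hP]
  have hMN : α * M * P ≤ α * N * P :=
    mul_le_mul_of_nonneg_right (mul_le_mul_of_nonneg_left h4 ha.le) hP.le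
  have hαN : 0 ≤ α * N := mul_nonneg ha.le hN
  nlinarith [h2', hMN, hαN, h3]

variable {V : Type} [Fintype V] [DecidableEq V] (G : SimpleGraph V) [DecidableRel G.Adj]



lemma codeg_bound (x y : V) :
    G.degree x + G.degree y ≤ Fintype.card V + (G.neighborFinset x ∩ G.neighborFinset y).card := by
  have h := Finset.card_union_add_card_inter (G.neighborFinset x) (G.neighborFinset y)
  have h2 : (G.neighborFinset x ∪ G.neighborFinset y).card ≤ Fintype.card V :=
    Finset.card_le_univ _
  unfold SimpleGraph.degree
  omega

lemma induce_degree (x : V) (y : ↥(G.neighborSet x)) :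
    (G.induce (G.neighborSet x)).degree y
      = (G.neighborFinset x ∩ G.neighborFinset y.val).card := by
  rw [SimpleGraph.degree]
  apply Finset.card_bij (fun z _ => z.val)
  · intro z hz
    rw [SimpleGraph.mem_neighborFinset] at hz
    simp only [comap_adj, Function.Embedding.coe_subtype] at hz
    simp only [Finset.mem_inter, SimpleGraph.mem_neighborFinset]
    exact ⟨z.2, hz⟩
  · intro z1 _ z2 _ h; exact Subtype.ext h
  · intro w hw
    simp only [Finset.mem_inter, SimpleGraph.mem_neighborFinset] at hw
    refine ⟨⟨w, hw.1⟩, ?_, rfl⟩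
    rw [SimpleGraph.mem_neighborFinset]
    simp only [comap_adj, Function.Embedding.coe_subtype]
    exact hw.2

lemma clique_lift {s : Set V} {k : ℕ} {c : Finset ↥s} (h : (G.induce s).IsNClique k c) :
    G.IsNClique k (c.image Subtype.val) := by
  constructor
  · intro a ha b hb hab
    simp only [Finset.coe_image, Set.mem_image, Finset.mem_coe] at ha hb
    obtain ⟨a', ha', rfl⟩ := ha
    obtain ⟨b', hb', rfl⟩ := hb
    have hne : a' ≠ b' := fun e => hab (by rw [e])
    have := h.1 ha' hb' hne
    simpa using this
  · rw [Finset.card_image_of_injective _ Subtype.val_injective, h.2]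



lemma sum_ind (s : Finset V) : ∑ x : V, (if x ∈ s then 1 else 0) = s.card := by
  rw [Finset.sum_ite_mem, Finset.univ_inter, Finset.sum_const, smul_eq_mul, mul_one]

lemma deg_as_sum (a : V) : ∑ x : V, (if G.Adj a x then 1 else 0) = G.degree a := by
  rw [← Finset.card_filter, SimpleGraph.degree, neighborFinset_eq_filter]

lemma sum_inter_deg (t : Finset V) :
    ∑ x : V, (t ∩ G.neighborFinset x).card = ∑ y ∈ t, G.degree y := by
  have h1 : ∀ x : V, (t ∩ G.neighborFinset x).card = ∑ y ∈ t, if G.Adj x y then 1 else 0 := by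
    intro x
    rw [← Finset.card_filter]
    congr 1
    ext y
    simp [SimpleGraph.mem_neighborFinset]
  simp_rw [h1]
  rw [Finset.sum_comm]
  apply Finset.sum_congr rfl
  intro y _
  rw [← deg_as_sum G y]
  apply Finset.sum_congr rfl
  intro x _
  simp [SimpleGraph.adj_comm]

lemma three_deg (a b c : V) :
    G.degree a + G.degree b + G.degree c ≤ Fintype.card V
      + (G.neighborFinset a ∩ G.neighborFinset b).card
      + (G.neighborFinset b ∩ G.neighborFinset c).card
      + (G.neighborFinset a ∩ G.neighborFinset c).card := by
  have key : ∀ x : V,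
      ((if G.Adj a x then 1 else 0) + (if G.Adj b x then 1 else 0) + (if G.Adj c x then 1 else 0))
      ≤ 1 + ((if x ∈ G.neighborFinset a ∩ G.neighborFinset b then 1 else 0)
          + (if x ∈ G.neighborFinset b ∩ G.neighborFinset c then 1 else 0)
          + (if x ∈ G.neighborFinset a ∩ G.neighborFinset c then 1 else 0)) := by
    intro x
    simp only [Finset.mem_inter, SimpleGraph.mem_neighborFinset]
    by_cases h1 : G.Adj a x <;> by_cases h2 : G.Adj b x <;> by_cases h3 : G.Adj c x <;>
      simp [h1, h2, h3]
  have hsum := Finset.sum_le_sum (fun x (_ : x ∈ (Finset.univ : Finset V)) => key x)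
  simp only [Finset.sum_add_distrib, deg_as_sum, sum_ind, Finset.sum_const,
    Finset.card_univ, smul_eq_mul, mul_one] at hsum
  omega

lemma count_inj3 (u v : V) (huv : G.Adj u v) :
    (G.neighborFinset u ∩ G.neighborFinset v).card
      ≤ ((G.cliqueFinset 3).filter fun s => u ∈ s ∧ v ∈ s).card := by
  apply Finset.card_le_card_of_injOn (fun w => insert u (insert v ({w} : Finset V)))
  · intro w hw
    simp only [Finset.mem_coe, Finset.mem_inter, SimpleGraph.mem_neighborFinset] at hw
    simp only [Finset.mem_coe, Finset.mem_filter, SimpleGraph.mem_cliqueFinset_iff]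
    refine ⟨?_, by simp, by simp⟩
    rw [show insert u (insert v ({w} : Finset V)) = {u, v, w} from rfl,
      SimpleGraph.is3Clique_triple_iff]
    exact ⟨huv, hw.1, hw.2⟩
  · intro w1 h1 w2 h2 he
    simp only [Finset.mem_coe, Finset.mem_inter, SimpleGraph.mem_neighborFinset] at h1 h2
    have hwu : w1 ≠ u := fun e => G.irrefl (e ▸ h1.1)
    have hwv : w1 ≠ v := fun e => G.irrefl (e ▸ h1.2)
    simp only at he
    have : w1 ∈ ({u, v, w2} : Finset V) := by
      rw [← he]; simp
    simp only [Finset.mem_insert, Finset.mem_singleton] at this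
    tauto

end PELhelpers


def Good (r : ℕ) (c : ℝ) : Prop :=
  ∀ (α : ℝ), 0 < α →
    ∀ (V : Type) [Fintype V] [DecidableEq V] (G : SimpleGraph V) [DecidableRel G.Adj] (n : ℕ),
      Fintype.card V = n →
      ((2 * (r : ℝ) - 5) / (2 * r - 3) + α) * n ≤ G.minDegree →
      ∀ t ∈ G.cliqueFinset r, ∃ u v, u ∈ t ∧ v ∈ t ∧ G.Adj u v ∧
        c * α * (n : ℝ) ^ (r - 2) ≤
          (((G.cliqueFinset r).filter fun s => u ∈ s ∧ v ∈ s).card : ℝ)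

lemma base : Good 3 1 := by
  intro α hα V _ _ G _ n hn hδ t ht
  rw [SimpleGraph.mem_cliqueFinset_iff] at ht
  obtain ⟨a, b, c, hab, hac, hbc, rfl⟩ := Finset.card_eq_three.mp ht.2
  have Hab : G.Adj a b := ht.1 (by simp) (by simp) hab
  have Hbc : G.Adj b c := ht.1 (by simp) (by simp) hbc
  have Hac : G.Adj a c := ht.1 (by simp) (by simp) hac
  have h3 := three_deg G a b c
  have hda := G.minDegree_le_degree a
  have hdb := G.minDegree_le_degree b
  have hdc := G.minDegree_le_degree c
  have hδ' : ((1:ℝ)/3 + α) * n ≤ G.minDegree := by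
    have e : ((2 * ((3:ℕ):ℝ) - 5) / (2 * ((3:ℕ):ℝ) - 3) + α) = 1/3 + α := by norm_num
    rw [e] at hδ; exact hδ
  rw [hn] at h3
  have key : α * n ≤ ((G.neighborFinset a ∩ G.neighborFinset b).card : ℝ)
      ∨ α * n ≤ ((G.neighborFinset b ∩ G.neighborFinset c).card : ℝ)
      ∨ α * n ≤ ((G.neighborFinset a ∩ G.neighborFinset c).card : ℝ) := by
    by_contra h
    push_neg at h
    obtain ⟨k1, k2, k3⟩ := h
    have c3 : (G.degree a : ℝ) + G.degree b + G.degree c ≤ n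
        + (G.neighborFinset a ∩ G.neighborFinset b).card
        + (G.neighborFinset b ∩ G.neighborFinset c).card
        + (G.neighborFinset a ∩ G.neighborFinset c).card := by
      exact_mod_cast h3
    have r1 : ((1:ℝ)/3 + α) * n ≤ (G.degree a : ℝ) := hδ'.trans (by exact_mod_cast hda)
    have r2 : ((1:ℝ)/3 + α) * n ≤ (G.degree b : ℝ) := hδ'.trans (by exact_mod_cast hdb)
    have r3 : ((1:ℝ)/3 + α) * n ≤ (G.degree c : ℝ) := hδ'.trans (by exact_mod_cast hdc)
    nlinarith
  have pow1 : ((1:ℝ)) * α * (n : ℝ) ^ (3 - 2) = α * n := by norm_num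
  rcases key with hk | hk | hk
  · exact ⟨a, b, by simp, by simp, Hab, by
      rw [pow1]; exact hk.trans (by exact_mod_cast count_inj3 G a b Hab)⟩
  · exact ⟨b, c, by simp, by simp, Hbc, by
      rw [pow1]; exact hk.trans (by exact_mod_cast count_inj3 G b c Hbc)⟩
  · exact ⟨a, c, by simp, by simp, Hac, by
      rw [pow1]; exact hk.trans (by exact_mod_cast count_inj3 G a c Hac)⟩


lemma perx {V : Type} [Fintype V] [DecidableEq V] (G : SimpleGraph V) [DecidableRel G.Adj]
    (r : ℕ) (hr : 3 ≤ r) (c : ℝ) (hc : 0 < c) (IH : Good r c) (α : ℝ) (hα : 0 < α)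
    (n : ℕ) (hn : Fintype.card V = n)
    (hδ : ((2 * ((r:ℝ)+1) - 5) / (2 * ((r:ℝ)+1) - 3) + α) * n ≤ G.minDegree)
    (hαa : α * (2 * (r:ℝ) - 1) < 2)
    (t : Finset V) (ht : t ∈ G.cliqueFinset (r+1))
    (x : V) (hx : r ≤ (t ∩ G.neighborFinset x).card) :
    ∃ u v, u ∈ t ∧ v ∈ t ∧ G.Adj u v ∧
      c * α * ((n:ℝ)/2) ^ (r-2) ≤
        (((G.cliqueFinset (r+1)).filter fun S => u ∈ S ∧ v ∈ S ∧ x ∈ S).card : ℝ) := by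
  classical
  rw [SimpleGraph.mem_cliqueFinset_iff] at ht
  have hr3 : (3:ℝ) ≤ (r:ℝ) := by exact_mod_cast hr
  have hp : (0:ℝ) < 2 * (r:ℝ) - 3 := by linarith
  have hq : (0:ℝ) < 2 * (r:ℝ) - 1 := by linarith
  have hn1 : 1 ≤ n := by
    rw [← hn]
    have hne : t.Nonempty := by
      rw [← Finset.card_pos, ht.2]; omega
    obtain ⟨v0, -⟩ := hne
    exact Fintype.card_pos_iff.mpr ⟨v0⟩
  have hA : ((2 * ((r:ℝ)+1) - 5) / (2 * ((r:ℝ)+1) - 3)) = (2*(r:ℝ)-3)/(2*(r:ℝ)-1) := by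
    congr 1 <;> ring
  rw [hA] at hδ
  have hnR : (0:ℝ) < (n:ℝ) := by exact_mod_cast hn1
  have hApos : (0:ℝ) < (2*(r:ℝ)-3)/(2*(r:ℝ)-1) := by positivity
  have hδpos : (0:ℝ) < (G.minDegree : ℝ) := by
    have h1 : (0:ℝ) < ((2*(r:ℝ)-3)/(2*(r:ℝ)-1) + α) * n := by positivity
    linarith
  set S : Set V := G.neighborSet x with hS
  set m : ℕ := Fintype.card ↥S with hm
  have hmdeg : m = G.degree x := G.card_neighborSet_eq_degree x
  have hmδ : G.minDegree ≤ m := hmdeg ▸ G.minDegree_le_degree x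
  have hmn : m ≤ n := by
    rw [← hn, hm]; exact Fintype.card_le_of_injective _ Subtype.val_injective
  have hδm : 0 < G.minDegree := by exact_mod_cast hδpos
  have hm1 : 0 < m := lt_of_lt_of_le hδm hmδ
  have hSne : Nonempty ↥S := Fintype.card_pos_iff.mp hm1
  set G' := G.induce S with hG'
  have hδreal : ((2*(r:ℝ)-3)/(2*(r:ℝ)-1) + α) * n ≤ (m:ℝ) :=
    hδ.trans (by exact_mod_cast hmδ)
  -- min degree of the induced graph
  have hmin' : ((2 * (r : ℝ) - 5) / (2 * r - 3) + α) * m ≤ G'.minDegree := by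
    obtain ⟨y0, hy0⟩ := G'.exists_minimal_degree_vertex
    rw [hy0]
    rw [show G'.degree y0 = (G.neighborFinset x ∩ G.neighborFinset y0.val).card from
      induce_degree G x y0]
    have hcb := codeg_bound G x y0.val
    rw [hn] at hcb
    have hdy : G.minDegree ≤ G.degree y0.val := G.minDegree_le_degree _
    have h2 : ((2*(r:ℝ)-3)/(2*(r:ℝ)-1) + α) * n ≤ (G.degree y0.val : ℝ) :=
      hδ.trans (by exact_mod_cast hdy)
    have h1 : (G.degree x : ℝ) + G.degree y0.val
        ≤ (n:ℝ) + ((G.neighborFinset x ∩ G.neighborFinset y0.val).card : ℝ) := by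
      exact_mod_cast hcb
    have key : ((2*(r:ℝ)-3-2)/(2*(r:ℝ)-3) + α) * m ≤ (m:ℝ) + (G.minDegree:ℝ) - n :=
      arith_key (2*(r:ℝ)-3) α (m:ℝ) (n:ℝ) (G.minDegree:ℝ) hp hα hnR.le
        (by rw [show (2*(r:ℝ)-3)+2 = 2*(r:ℝ)-1 by ring]; exact hαa)
        (by rw [show (2*(r:ℝ)-3)+2 = 2*(r:ℝ)-1 by ring]; exact hδ)
        (by exact_mod_cast hmδ) (by exact_mod_cast hmn)
    rw [show 2*(r:ℝ)-3-2 = 2*(r:ℝ)-5 by ring] at key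
    have hmx : (m:ℝ) = (G.degree x : ℝ) := by exact_mod_cast hmdeg
    have hdy' : (G.minDegree:ℝ) ≤ (G.degree y0.val : ℝ) := by exact_mod_cast hdy
    linarith
  -- inner clique from t ∩ N(x)
  obtain ⟨t', ht'sub, ht'card⟩ := Finset.exists_subset_card_eq hx
  have ht't : t' ⊆ t := ht'sub.trans Finset.inter_subset_left
  have ht'N : ∀ y ∈ t', y ∈ S := by
    intro y hy
    have h := ht'sub hy
    rw [Finset.mem_inter, SimpleGraph.mem_neighborFinset] at h
    exact h.2
  set s'' : Finset ↥S := t'.subtype (· ∈ S) with hs''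
  have hs''card : s''.card = r := by
    rw [hs'', Finset.card_subtype, Finset.filter_true_of_mem ht'N, ht'card]
  have hs''cl : G'.IsNClique r s'' := by
    constructor
    · intro a ha b hb hab
      simp only [hs'', Finset.mem_coe, Finset.mem_subtype] at ha hb
      have hadj : G.Adj a.val b.val :=
        ht.1 (ht't ha) (ht't hb) (fun e => hab (Subtype.ext e))
      exact hadj
    · exact hs''card
  have hs''mem : s'' ∈ G'.cliqueFinset r := (SimpleGraph.mem_cliqueFinset_iff).mpr hs''cl
  obtain ⟨u', v', hu', hv', huv', hcount⟩ := IH α hα ↥S G' m rfl hmin' s'' hs''mem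
  have hu't : u'.val ∈ t := ht't (Finset.mem_subtype.mp hu')
  have hv't : v'.val ∈ t := ht't (Finset.mem_subtype.mp hv')
  have huv : G.Adj u'.val v'.val := by exact huv'
  refine ⟨u'.val, v'.val, hu't, hv't, huv, ?_⟩
  -- injection of cliques
  have hximg : ∀ s : Finset ↥S, x ∉ s.image Subtype.val := by
    intro s hxm
    simp only [Finset.mem_image] at hxm
    obtain ⟨z, -, hz⟩ := hxm
    have : G.Adj x z.val := z.2
    rw [hz] at this
    exact G.irrefl this
  have hinj : (((G'.cliqueFinset r).filter fun s => u' ∈ s ∧ v' ∈ s).card : ℕ)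
      ≤ ((G.cliqueFinset (r+1)).filter fun S' => u'.val ∈ S' ∧ v'.val ∈ S' ∧ x ∈ S').card := by
    apply Finset.card_le_card_of_injOn (fun s => insert x (s.image Subtype.val))
    · intro s hs
      simp only [Finset.mem_coe, Finset.mem_filter, SimpleGraph.mem_cliqueFinset_iff] at hs ⊢
      obtain ⟨hcl, hus, hvs⟩ := hs
      refine ⟨?_, Finset.mem_insert_of_mem (Finset.mem_image_of_mem _ hus),
        Finset.mem_insert_of_mem (Finset.mem_image_of_mem _ hvs), Finset.mem_insert_self _ _⟩
      have him := clique_lift G hcl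
      apply him.insert
      intro b hb
      simp only [Finset.mem_image] at hb
      obtain ⟨z, -, rfl⟩ := hb
      exact z.2
    · intro s1 h1 s2 h2 he
      simp only at he
      have heq : s1.image Subtype.val = s2.image Subtype.val := by
        have h3 := congrArg (fun (w : Finset V) => w.erase x) he
        simpa [Finset.erase_insert, hximg s1, hximg s2] using h3
      exact Finset.image_injective Subtype.val_injective heq
  -- size comparison
  have hm2 : (n:ℝ)/2 ≤ (m:ℝ) := by
    have hA35 : (3:ℝ)/5 ≤ (2*(r:ℝ)-3)/(2*(r:ℝ)-1) := by
      rw [div_le_div_iff₀ (by norm_num) hq]; linarith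
    nlinarith
  have hmono : c * α * ((n:ℝ)/2) ^ (r-2) ≤ c * α * (m:ℝ) ^ (r-2) := by
    have := pow_le_pow_left₀ (by positivity) hm2 (r-2)
    have hca : (0:ℝ) ≤ c * α := by positivity
    nlinarith [this, hca]
  refine hmono.trans (hcount.trans ?_)
  exact_mod_cast hinj


lemma step (r : ℕ) (hr : 3 ≤ r) (c : ℝ) (hc : 0 < c) (IH : Good r c) :
    Good (r+1) (c / (5 * 2^(r-2) * ((r:ℝ)+1)^3)) := by
  intro α hα V _ _ G _ n hn hδ t ht
  have htcl := (SimpleGraph.mem_cliqueFinset_iff).mp ht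
  have hr3 : (3:ℝ) ≤ (r:ℝ) := by exact_mod_cast hr
  have hp : (0:ℝ) < 2 * (r:ℝ) - 3 := by linarith
  have hq : (0:ℝ) < 2 * (r:ℝ) - 1 := by linarith
  have hRpos : (0:ℝ) < (r:ℝ) + 1 := by linarith
  have htne : t.Nonempty := by rw [← Finset.card_pos, htcl.2]; omega
  obtain ⟨v0, hv0⟩ := htne
  have hn1 : 1 ≤ n := by
    rw [← hn]; exact Fintype.card_pos_iff.mpr ⟨v0⟩
  have hnR : (0:ℝ) < (n:ℝ) := by exact_mod_cast hn1
  -- rewrite the min degree hypothesis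
  have hδ' : ((2*(r:ℝ)-3)/(2*(r:ℝ)-1) + α) * n ≤ (G.minDegree : ℝ) := by
    have e : ((2 * ((r:ℕ)+1 : ℕ) : ℝ) - 5) / (2 * ((r:ℕ)+1 : ℕ) - 3)
        = (2*(r:ℝ)-3)/(2*(r:ℝ)-1) := by push_cast; congr 1 <;> ring
    rw [e] at hδ; exact hδ
  have hδ'' : ((2 * ((r:ℝ)+1) - 5) / (2 * ((r:ℝ)+1) - 3) + α) * n ≤ (G.minDegree : ℝ) := by
    have e : (2 * ((r:ℝ)+1) - 5) / (2 * ((r:ℝ)+1) - 3) = (2*(r:ℝ)-3)/(2*(r:ℝ)-1) := by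
      congr 1 <;> ring
    rw [e]; exact hδ'
  -- α is small
  have hαa : α * (2 * (r:ℝ) - 1) < 2 := by
    have hdlt : (G.minDegree : ℝ) < n := by
      have h1 : G.minDegree < n := by
        rw [← hn]
        exact lt_of_le_of_lt (G.minDegree_le_degree v0) (G.degree_lt_card_verts v0)
      exact_mod_cast h1
    have h2 : ((2*(r:ℝ)-3)/(2*(r:ℝ)-1) + α) * n < 1 * n := by
      rw [one_mul]; exact lt_of_le_of_lt hδ' hdlt
    have h3 : (2*(r:ℝ)-3)/(2*(r:ℝ)-1) + α < 1 := lt_of_mul_lt_mul_right h2 hnR.le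
    have h4 : (2*(r:ℝ)-3)/(2*(r:ℝ)-1) * (2*(r:ℝ)-1) = 2*(r:ℝ)-3 :=
      div_mul_cancel₀ _ hq.ne'
    nlinarith [mul_lt_mul_of_pos_right h3 hq]
  -- the set W
  set W : Finset V := Finset.univ.filter (fun x : V => r ≤ (t ∩ G.neighborFinset x).card)
    with hW
  -- counting bound for W
  have hWcount : (r+1) * G.minDegree ≤ (r-1)*n + 2*W.card := by
    have h1 : (r+1) * G.minDegree ≤ ∑ y ∈ t, G.degree y := by
      have := Finset.card_nsmul_le_sum t (fun y => G.degree y) G.minDegree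
        (fun y _ => G.minDegree_le_degree y)
      rwa [htcl.2, smul_eq_mul] at this
    have h2 : ∑ y ∈ t, G.degree y = ∑ x : V, (t ∩ G.neighborFinset x).card :=
      (sum_inter_deg G t).symm
    have h3 : ∑ x : V, (t ∩ G.neighborFinset x).card
        ≤ ∑ x : V, ((r-1) + if x ∈ W then 2 else 0) := by
      apply Finset.sum_le_sum
      intro x _
      by_cases hxW : x ∈ W
      · simp only [hxW, if_true]
        have : (t ∩ G.neighborFinset x).card ≤ t.card :=
          Finset.card_le_card Finset.inter_subset_left
        rw [htcl.2] at this; omega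
      · simp only [hxW, if_false]
        have : ¬ (r ≤ (t ∩ G.neighborFinset x).card) := by
          rw [hW] at hxW; simpa using hxW
        omega
    have h4 : ∑ x : V, ((r-1) + if x ∈ W then 2 else 0) = (r-1)*n + 2*W.card := by
      rw [Finset.sum_add_distrib, Finset.sum_const, Finset.sum_ite_mem, Finset.univ_inter,
        Finset.sum_const, Finset.card_univ, hn, smul_eq_mul, smul_eq_mul]
      ring
    omega
  -- real bound on W
  have hWn : (n:ℝ)/5 ≤ (W.card:ℝ) := by
    have hc1 : ((r:ℝ)+1) * (G.minDegree:ℝ) ≤ ((r:ℝ)-1)*n + 2*W.card := by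
      have hcast : (((r-1)*n + 2*W.card : ℕ) : ℝ) = ((r:ℝ)-1)*n + 2*W.card := by
        push_cast [Nat.cast_sub (show 1 ≤ r by omega)]; ring
      calc ((r:ℝ)+1) * (G.minDegree:ℝ) = (((r+1)*G.minDegree : ℕ):ℝ) := by push_cast; ring
      _ ≤ (((r-1)*n + 2*W.card : ℕ):ℝ) := by exact_mod_cast hWcount
      _ = _ := hcast
    have hc2 : ((r:ℝ)+1) * (((2*(r:ℝ)-3)/(2*(r:ℝ)-1) + α) * n) ≤ ((r:ℝ)+1) * G.minDegree :=
      mul_le_mul_of_nonneg_left hδ' (by linarith)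
    have hkey : ((r:ℝ)+1) * (((2*(r:ℝ)-3)/(2*(r:ℝ)-1) + α) * n) * (2*(r:ℝ)-1)
        = ((r:ℝ)+1)*(2*(r:ℝ)-3)*n + ((r:ℝ)+1)*α*(2*(r:ℝ)-1)*n := by
      linear_combination ((r:ℝ)+1)*(n:ℝ)*(div_mul_cancel₀ (2*(r:ℝ)-3) hq.ne')
    have h6 := mul_le_mul_of_nonneg_right (hc2.trans hc1) hq.le
    rw [hkey] at h6
    nlinarith [h6, mul_nonneg (mul_nonneg (mul_nonneg (by linarith : (0:ℝ) ≤ (r:ℝ)+1) hα.le) hq.le) hnR.le,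
      mul_nonneg (by linarith : (0:ℝ) ≤ (r:ℝ)-3) hnR.le]
  -- choose popular pairs for each x in W
  set B : ℝ := c * α * ((n:ℝ)/2)^(r-2) with hB
  have hBpos : 0 < B := by rw [hB]; positivity
  have hx : ∀ x ∈ W, ∃ p : V × V, p.1 ∈ t ∧ p.2 ∈ t ∧ G.Adj p.1 p.2 ∧
      B ≤ (((G.cliqueFinset (r+1)).filter fun S => p.1 ∈ S ∧ p.2 ∈ S ∧ x ∈ S).card : ℝ) := by
    intro x hxW
    have hxr : r ≤ (t ∩ G.neighborFinset x).card := by rw [hW] at hxW; simpa using hxW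
    obtain ⟨u, v, hu, hv, huv, hcnt⟩ := perx G r hr c hc IH α hα n hn hδ'' hαa t ht x hxr
    exact ⟨(u, v), hu, hv, huv, hcnt⟩
  set e : V → V × V := fun x => if h : x ∈ W then (hx x h).choose else (v0, v0) with he
  have hespec : ∀ (x : V) (h : x ∈ W), (e x).1 ∈ t ∧ (e x).2 ∈ t ∧ G.Adj (e x).1 (e x).2 ∧
      B ≤ (((G.cliqueFinset (r+1)).filter fun S => (e x).1 ∈ S ∧ (e x).2 ∈ S ∧ x ∈ S).card : ℝ) := by
    intro x h
    have : e x = (hx x h).choose := by rw [he]; simp only [dif_pos h]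
    rw [this]
    exact (hx x h).choose_spec
  have hmaps : ∀ x ∈ W, e x ∈ t ×ˢ t := by
    intro x h
    obtain ⟨h1, h2, -, -⟩ := hespec x h
    exact Finset.mem_product.mpr ⟨h1, h2⟩
  have hfibersum : ∑ p ∈ t ×ˢ t, (W.filter (fun x => e x = p)).card = W.card :=
    (Finset.card_eq_sum_card_fiberwise hmaps).symm
  have hpig : ∃ p ∈ t ×ˢ t,
      (W.card : ℝ)/(((r:ℝ)+1)^2) ≤ ((W.filter (fun x => e x = p)).card : ℝ) := by
    apply Finset.exists_le_of_sum_le (Finset.nonempty_product.mpr ⟨⟨v0, hv0⟩, ⟨v0, hv0⟩⟩)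
    have hL : ∑ _p ∈ t ×ˢ t, (W.card : ℝ)/(((r:ℝ)+1)^2) = (W.card : ℝ) := by
      rw [Finset.sum_const, nsmul_eq_mul, Finset.card_product, htcl.2]
      push_cast
      field_simp
    have hR : ∑ p ∈ t ×ˢ t, ((W.filter (fun x => e x = p)).card : ℝ) = (W.card:ℝ) := by
      rw [← Nat.cast_sum]
      exact_mod_cast congrArg (fun k : ℕ => (k:ℝ)) hfibersum
    rw [hL, hR]
  obtain ⟨p, hpt, hfib⟩ := hpig
  set W' := W.filter (fun x => e x = p) with hW'
  have hW'W : W' ⊆ W := Finset.filter_subset _ _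
  have hW'card : (n:ℝ)/5/(((r:ℝ)+1)^2) ≤ (W'.card : ℝ) := by
    refine le_trans ?_ hfib
    gcongr
  have hW'pos : (0:ℝ) < (W'.card : ℝ) := lt_of_lt_of_le (by positivity) hW'card
  have hW'ne : W'.Nonempty := Finset.card_pos.mp (by exact_mod_cast hW'pos)
  obtain ⟨x0, hx0⟩ := hW'ne
  have hx0W : x0 ∈ W := hW'W hx0
  have hx0e : e x0 = p := (Finset.mem_filter.mp hx0).2
  obtain ⟨hpt1, hpt2, hpadj, -⟩ := hespec x0 hx0W
  rw [hx0e] at hpt1 hpt2 hpadj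
  refine ⟨p.1, p.2, hpt1, hpt2, hpadj, ?_⟩
  set P := (G.cliqueFinset (r+1)).filter (fun S => p.1 ∈ S ∧ p.2 ∈ S) with hP
  have hxP : ∀ x ∈ W', B ≤ ((P.filter (fun S => x ∈ S)).card : ℝ) := by
    intro x hxW'
    have hxe : e x = p := (Finset.mem_filter.mp hxW').2
    obtain ⟨-, -, -, hcnt⟩ := hespec x (hW'W hxW')
    rw [hxe] at hcnt
    refine le_trans hcnt ?_
    apply Nat.cast_le.mpr
    apply Finset.card_le_card
    intro S hS
    simp only [Finset.mem_filter, hP] at hS ⊢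
    tauto
  have hswap : ∑ x ∈ W', (P.filter (fun S => x ∈ S)).card
      = ∑ S ∈ P, (W'.filter (fun x => x ∈ S)).card := by
    simp_rw [Finset.card_filter]
    exact Finset.sum_comm
  have hPbound : ∑ S ∈ P, (W'.filter (fun x => x ∈ S)).card ≤ P.card * (r+1) := by
    refine le_trans (Finset.sum_le_card_nsmul P _ (r+1) ?_) (by rw [smul_eq_mul])
    intro S hS
    have hScard : S.card = r+1 :=
      ((SimpleGraph.mem_cliqueFinset_iff).mp (Finset.mem_filter.mp hS).1).2
    calc (W'.filter (fun x => x ∈ S)).card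
        ≤ S.card := Finset.card_le_card (fun y hy => (Finset.mem_filter.mp hy).2)
      _ = r+1 := hScard
  have hmain : B * W'.card ≤ (P.card : ℝ) * ((r:ℝ)+1) := by
    calc B * W'.card = ∑ _x ∈ W', B := by rw [Finset.sum_const, nsmul_eq_mul]; ring
    _ ≤ ∑ x ∈ W', ((P.filter (fun S => x ∈ S)).card : ℝ) := Finset.sum_le_sum hxP
    _ = ((∑ x ∈ W', (P.filter (fun S => x ∈ S)).card : ℕ) : ℝ) := (Nat.cast_sum _ _).symm
    _ ≤ ((P.card * (r+1) : ℕ) : ℝ) := by exact_mod_cast (hswap ▸ hPbound)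
    _ = (P.card : ℝ) * ((r:ℝ)+1) := by push_cast; ring
  have hRne : ((r:ℝ)+1) ≠ 0 := by positivity
  have h2p : ((2:ℝ))^(r-2) ≠ 0 := by positivity
  have hgoal : c / (5 * 2^(r-2) * ((r:ℝ)+1)^3) * α * (n:ℝ)^(r+1-2)
      = B * ((n:ℝ)/5/(((r:ℝ)+1)^2)) / ((r:ℝ)+1) := by
    rw [show r+1-2 = (r-2)+1 from by omega, pow_succ ((n:ℝ)) (r-2), hB, div_pow]
    field_simp
  rw [hgoal, div_le_iff₀ hRpos]
  calc B * ((n:ℝ)/5/(((r:ℝ)+1)^2)) ≤ B * W'.card := by gcongr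
  _ ≤ (P.card:ℝ) * ((r:ℝ)+1) := hmain

theorem popular_edge_lemma (r : ℕ) (hr : 3 ≤ r) :
    ∃ c : ℝ, 0 < c ∧
      ∀ (α : ℝ), 0 < α →
        ∀ (V : Type) [Fintype V] [DecidableEq V] (G : SimpleGraph V)
          [DecidableRel G.Adj] (n : ℕ),
          Fintype.card V = n →
          ((2 * (r : ℝ) - 5) / (2 * r - 3) + α) * n ≤ G.minDegree →
          ∀ t ∈ G.cliqueFinset r, ∃ u v, u ∈ t ∧ v ∈ t ∧ G.Adj u v ∧
            c * α * (n : ℝ) ^ (r - 2) ≤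
              (((G.cliqueFinset r).filter fun s => u ∈ s ∧ v ∈ s).card : ℝ) := by
  have h : ∃ c : ℝ, 0 < c ∧ Good r c := by
    induction r, hr using Nat.le_induction with
    | base => exact ⟨1, one_pos, base⟩
    | succ k hk ih =>
      obtain ⟨c, hc, hg⟩ := ih
      exact ⟨c / (5 * 2^(k-2) * ((k:ℝ)+1)^3), by positivity, step k hk c hc hg⟩
  obtain ⟨c, hc, hg⟩ := h
  exact ⟨c, hc, hg⟩
end

section
/- For every r ≥ 3 there is a constant μ_r > 0 such that for all α, ε > 0 the following holds: if G is an n-vertex graph with minimum degree at least ((2r−5)/(2r−3)+α)·n and G contains at most μ_r·α·ε·n^r copies of K_r, then there is a set of at most ε·n² edges of G whose removal makes G K_r-free. -/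
open Finset SimpleGraph
open scoped Classical

lemma alg_step (x n d m α : ℝ) (hx : 3 ≤ x) (hn : 1 ≤ n) (hα : 0 < α)
    (hd : ((2*x-3)/(2*x-1) + α) * n ≤ d) (hd' : d ≤ n - 1) (hm : d ≤ m) (hmn : m ≤ n) :
    ((2*x-5)/(2*x-3) + α) * m ≤ d + m - n := by
  have hb : (0:ℝ) < 2*x-3 := by linarith
  have ha : (0:ℝ) < 2*x-1 := by linarith
  -- α*(2x-1) ≤ 2
  have h0 : (2*x-3)/(2*x-1) * n = (2*x-3)*n/(2*x-1) := by ring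
  have hαa : α * (2*x-1) ≤ 2 := by
    have h1 : (2*x-3)*n/(2*x-1) + α * n ≤ n - 1 := by
      calc (2*x-3)*n/(2*x-1) + α * n = ((2*x-3)/(2*x-1) + α) * n := by ring
        _ ≤ d := hd
        _ ≤ n - 1 := hd'
    have h1' : (2*x-3)*n/(2*x-1) ≤ (n-1) - α*n := by linarith
    rw [div_le_iff₀ ha] at h1'
    nlinarith [h1', hn]
  -- n - d ≤ n*(2/(2x-1) - α)
  have h1 : n - d ≤ n * (2/(2*x-1) - α) := by
    have : ((2*x-3)/(2*x-1)) = 1 - 2/(2*x-1) := by field_simp; ring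
    rw [this] at hd
    nlinarith [hd]
  have h2 : α ≤ 2/(2*x-1) := by rw [le_div_iff₀ ha]; linarith
  have h2' : (0:ℝ) ≤ 2/(2*x-3) - α := by
    have : 2/(2*x-1) ≤ 2/(2*x-3) := by
      apply div_le_div_of_nonneg_left (by norm_num) hb (by linarith)
    linarith
  have hd0 : 0 ≤ d := by
    have hnn : 0 ≤ ((2*x-3)/(2*x-1) + α) * n := by positivity
    linarith
  have h3 : n * (2/(2*x-1) - α) ≤ m * (2/(2*x-3) - α) := by
    have hkey : (2/(2*x-1) - α) ≤ ((2*x-3)/(2*x-1) + α) * (2/(2*x-3) - α) := by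
      have e1 : ((2*x-3)/(2*x-1) + α) * (2/(2*x-3) - α) - (2/(2*x-1) - α)
          = α * (2/(2*x-1) + 2/(2*x-3) - α) := by
        field_simp
        ring
      nlinarith [e1, h2, mul_pos hα (show (0:ℝ) < 2/(2*x-3) by positivity)]
    calc n * (2/(2*x-1) - α) ≤ n * (((2*x-3)/(2*x-1) + α) * (2/(2*x-3) - α)) := by
          nlinarith [hkey, hn]
      _ = (((2*x-3)/(2*x-1) + α) * n) * (2/(2*x-3) - α) := by ring
      _ ≤ m * (2/(2*x-3) - α) := by nlinarith [hd, hm, h2']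
  have h4 : ((2*x-5)/(2*x-3) + α) = 1 - (2/(2*x-3) - α) := by field_simp; ring
  rw [h4]
  nlinarith [h1, h3]

lemma degSum {V : Type} [Fintype V] [DecidableEq V] (H : SimpleGraph V) [DecidableRel H.Adj]
    (k : ℕ) (hk : 2 ≤ k) (s : Finset V) (hs : s.card = k) :
    (k : ℝ) * H.minDegree ≤ ((k:ℝ) - 2) * (Fintype.card V) +
      2 * ((univ.filter (fun z => k - 1 ≤ (s.filter (fun v => H.Adj z v)).card)).card : ℝ) := by
  set Z := univ.filter (fun z => k - 1 ≤ (s.filter (fun v => H.Adj z v)).card) with hZ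
  set W := univ.filter (fun z => ¬ (k - 1 ≤ (s.filter (fun v => H.Adj z v)).card)) with hW
  have e1 : ∀ v : V, H.degree v = (univ.filter (fun z => H.Adj z v)).card := by
    intro v
    rw [← card_neighborFinset_eq_degree]
    congr 1
    ext z
    simp [mem_neighborFinset, adj_comm]
  have e2 : ∑ v ∈ s, H.degree v = ∑ z : V, (s.filter (fun v => H.Adj z v)).card := by
    simp_rw [e1, card_filter]
    exact Finset.sum_comm
  have e3 : k * H.minDegree ≤ ∑ v ∈ s, H.degree v := by
    have := Finset.card_nsmul_le_sum s (fun v => H.degree v) H.minDegree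
      (fun v _ => H.minDegree_le_degree v)
    rw [hs, smul_eq_mul] at this
    exact this
  have e4 : ∑ z : V, (s.filter (fun v => H.Adj z v)).card ≤ Z.card * k + W.card * (k-2) := by
    rw [← Finset.sum_filter_add_sum_filter_not univ
      (fun z => k - 1 ≤ (s.filter (fun v => H.Adj z v)).card)]
    gcongr ?_ + ?_
    · have := Finset.sum_le_card_nsmul Z (fun z => (s.filter (fun v => H.Adj z v)).card) k
        (fun z _ => by
          calc (s.filter (fun v => H.Adj z v)).card ≤ s.card := card_le_card (filter_subset _ _)
            _ = k := hs)
      simpa only [smul_eq_mul] using this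
    · have := Finset.sum_le_card_nsmul W (fun z => (s.filter (fun v => H.Adj z v)).card) (k-2)
        (fun z hz => by
          have hz' := (mem_filter.mp hz).2
          show (s.filter (fun v => H.Adj z v)).card ≤ k - 2
          omega)
      simpa only [smul_eq_mul] using this
  have e5 : Z.card + W.card = Fintype.card V := by
    rw [hZ, hW]
    rw [Finset.card_filter_add_card_filter_not]
    exact card_univ
  have hZn : Z.card ≤ Fintype.card V := by omega
  have key : k * H.minDegree ≤ Z.card * k + W.card * (k-2) := by
    calc k * H.minDegree ≤ ∑ v ∈ s, H.degree v := e3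
      _ = _ := e2
      _ ≤ _ := e4
  -- cast to ℝ
  have hWeq : W.card = Fintype.card V - Z.card := by omega
  rw [hWeq] at key
  have : (k:ℝ) * H.minDegree ≤ (Z.card : ℝ) * k + ((Fintype.card V : ℝ) - Z.card) * ((k:ℝ)-2) := by
    calc (k:ℝ) * H.minDegree ≤ ((Z.card * k + (Fintype.card V - Z.card) * (k-2) : ℕ) : ℝ) := by
          exact_mod_cast key
      _ = (Z.card : ℝ) * k + ((Fintype.card V : ℝ) - Z.card) * ((k:ℝ)-2) := by
          push_cast [Nat.cast_sub hZn, Nat.cast_sub hk]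
          ring
  linarith

lemma pigeon {V : Type} [Fintype V] [DecidableEq V] (H : SimpleGraph V) [DecidableRel H.Adj]
    (K : ℕ) (s Z : Finset V) (hZ : Z.Nonempty) (hsne : s.Nonempty) (B : ℝ) (hB0 : 0 ≤ B)
    (hB : ∀ u ∈ Z, ∃ p q : V, p ∈ s ∧ q ∈ s ∧ H.Adj p q ∧
       B ≤ (((H.cliqueFinset K).filter (fun t => p ∈ t ∧ q ∈ t ∧ u ∈ t)).card : ℝ)) :
    ∃ p q : V, p ∈ s ∧ q ∈ s ∧ H.Adj p q ∧
      (Z.card : ℝ) * B ≤ (s.card:ℝ)^2 * K *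
        (((H.cliqueFinset K).filter (fun t => p ∈ t ∧ q ∈ t)).card : ℝ) := by
  obtain ⟨u₀, hu₀⟩ := hZ
  have hB' : ∀ u : V, ∃ pq : V × V, u ∈ Z → (pq.1 ∈ s ∧ pq.2 ∈ s ∧ H.Adj pq.1 pq.2 ∧
      B ≤ (((H.cliqueFinset K).filter (fun t => pq.1 ∈ t ∧ pq.2 ∈ t ∧ u ∈ t)).card : ℝ)) := by
    intro u
    by_cases hu : u ∈ Z
    · obtain ⟨p, q, h1, h2, h3, h4⟩ := hB u hu
      exact ⟨(p, q), fun _ => ⟨h1, h2, h3, h4⟩⟩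
    · exact ⟨(u₀, u₀), fun h => absurd h hu⟩
  choose f hf using hB'
  set P := s ×ˢ s with hP
  have hmaps : ∀ u ∈ Z, f u ∈ P := fun u hu =>
    mem_product.mpr ⟨(hf u hu).1, (hf u hu).2.1⟩
  have hfib := Finset.card_eq_sum_card_fiberwise hmaps
  have hPne : P.Nonempty := hsne.product hsne
  -- exists a fiber of size ≥ |Z|/|P|
  have hex : ∃ a ∈ P, Z.card ≤ P.card * (Z.filter (fun u => f u = a)).card := by
    by_contra hcon
    push_neg at hcon
    have hlt : ∀ a ∈ P, P.card * (Z.filter (fun u => f u = a)).card < Z.card :=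
      fun a ha => hcon a ha
    have hsum : ∑ a ∈ P, P.card * (Z.filter (fun u => f u = a)).card < ∑ a ∈ P, Z.card :=
      Finset.sum_lt_sum_of_nonempty hPne hlt
    rw [← Finset.mul_sum, ← hfib, Finset.sum_const, smul_eq_mul] at hsum
    omega
  obtain ⟨a, haP, hcard⟩ := hex
  set fib := Z.filter (fun u => f u = a) with hfibdef
  have hfibne : fib.Nonempty := by
    rw [← Finset.card_pos]
    rcases Nat.eq_zero_or_pos fib.card with h | h
    · rw [h, Nat.mul_zero] at hcard
      have : 0 < Z.card := Finset.card_pos.mpr ⟨u₀, hu₀⟩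
      omega
    · exact h
  obtain ⟨u₁, hu₁⟩ := hfibne
  have hu₁Z : u₁ ∈ Z := (mem_filter.mp hu₁).1
  have hu₁f : f u₁ = a := (mem_filter.mp hu₁).2
  obtain ⟨hp, hq, hadj, _⟩ := hf u₁ hu₁Z
  refine ⟨(f u₁).1, (f u₁).2, hp, hq, hadj, ?_⟩
  set p := (f u₁).1
  set q := (f u₁).2
  -- sum over the fiber
  have hsum1 : (fib.card : ℝ) * B ≤
      ∑ u ∈ fib, (((H.cliqueFinset K).filter (fun t => p ∈ t ∧ q ∈ t ∧ u ∈ t)).card : ℝ) := by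
    have := Finset.card_nsmul_le_sum fib
      (fun u => (((H.cliqueFinset K).filter (fun t => p ∈ t ∧ q ∈ t ∧ u ∈ t)).card : ℝ)) B
      (fun u hu => by
        have huZ : u ∈ Z := (mem_filter.mp hu).1
        have huf : f u = a := (mem_filter.mp hu).2
        have := (hf u huZ).2.2.2
        have hfeq : f u = f u₁ := by rw [huf, hu₁f]
        rw [hfeq] at this
        exact this)
    simpa only [nsmul_eq_mul] using this
  have hsum2 : ∑ u ∈ fib, (((H.cliqueFinset K).filter (fun t => p ∈ t ∧ q ∈ t ∧ u ∈ t)).card) ≤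
      K * ((H.cliqueFinset K).filter (fun t => p ∈ t ∧ q ∈ t)).card := by
    have e1 : ∀ u, (((H.cliqueFinset K).filter (fun t => p ∈ t ∧ q ∈ t ∧ u ∈ t)).card) =
        ∑ t ∈ H.cliqueFinset K, if p ∈ t ∧ q ∈ t ∧ u ∈ t then 1 else 0 := by
      intro u; rw [Finset.card_filter]
    simp_rw [e1]
    rw [Finset.sum_comm]
    have e2 : ∀ t ∈ H.cliqueFinset K,
        (∑ u ∈ fib, if p ∈ t ∧ q ∈ t ∧ u ∈ t then 1 else 0) ≤
          (if p ∈ t ∧ q ∈ t then K else 0) := by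
      intro t ht
      by_cases hpq : p ∈ t ∧ q ∈ t
      · rw [if_pos hpq]
        have : (∑ u ∈ fib, if p ∈ t ∧ q ∈ t ∧ u ∈ t then 1 else 0) =
            ∑ u ∈ fib, if u ∈ t then 1 else 0 := by
          apply Finset.sum_congr rfl
          intro u _
          by_cases hu : u ∈ t
          · rw [if_pos ⟨hpq.1, hpq.2, hu⟩, if_pos hu]
          · rw [if_neg (fun h => hu h.2.2), if_neg hu]
        rw [this, ← Finset.card_filter]
        calc (fib.filter (fun u => u ∈ t)).card ≤ t.card :=
              card_le_card (fun x hx => (mem_filter.mp hx).2)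
          _ = K := ((mem_cliqueFinset_iff.mp ht).card_eq)
      · rw [if_neg hpq]
        have : (∑ u ∈ fib, if p ∈ t ∧ q ∈ t ∧ u ∈ t then 1 else 0) = 0 := by
          apply Finset.sum_eq_zero
          intro u _
          rw [if_neg (fun h => hpq ⟨h.1, h.2.1⟩)]
        rw [this]
    calc ∑ t ∈ H.cliqueFinset K, (∑ u ∈ fib, if p ∈ t ∧ q ∈ t ∧ u ∈ t then 1 else 0)
        ≤ ∑ t ∈ H.cliqueFinset K, (if p ∈ t ∧ q ∈ t then K else 0) := Finset.sum_le_sum e2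
      _ = K * ((H.cliqueFinset K).filter (fun t => p ∈ t ∧ q ∈ t)).card := by
          rw [← Finset.sum_filter, Finset.sum_const, smul_eq_mul, mul_comm]
  -- combine
  have hZfib : (Z.card : ℝ) ≤ (P.card : ℝ) * fib.card := by exact_mod_cast hcard
  have hPcard : (P.card : ℝ) = (s.card : ℝ)^2 := by
    rw [hP, Finset.card_product]
    push_cast
    ring
  calc (Z.card : ℝ) * B ≤ ((P.card : ℝ) * fib.card) * B := by
        apply mul_le_mul_of_nonneg_right hZfib hB0
    _ = (P.card : ℝ) * ((fib.card : ℝ) * B) := by ring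
    _ ≤ (P.card : ℝ) * ∑ u ∈ fib,
          (((H.cliqueFinset K).filter (fun t => p ∈ t ∧ q ∈ t ∧ u ∈ t)).card : ℝ) := by
        apply mul_le_mul_of_nonneg_left hsum1 (by positivity)
    _ ≤ (P.card : ℝ) * (K * ((H.cliqueFinset K).filter (fun t => p ∈ t ∧ q ∈ t)).card) := by
        apply mul_le_mul_of_nonneg_left _ (by positivity)
        rw [← Nat.cast_sum]
        exact_mod_cast hsum2
    _ = (s.card:ℝ)^2 * K * (((H.cliqueFinset K).filter (fun t => p ∈ t ∧ q ∈ t)).card : ℝ) := by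
        rw [hPcard]; ring

lemma step_inner {V : Type} [Fintype V] [DecidableEq V] (H : SimpleGraph V) [DecidableRel H.Adj]
    (k : ℕ) (hk3 : 3 ≤ k) (C : ℝ) (hC : 0 < C)
    (IH : ∀ (W : Type) [Fintype W] [DecidableEq W] (H' : SimpleGraph W) [DecidableRel H'.Adj],
      ∀ α : ℝ, 0 < α →
      ((2*(k:ℝ)-5)/(2*(k:ℝ)-3) + α) * (Fintype.card W : ℝ) ≤ (H'.minDegree : ℝ) →
      ∀ s ∈ H'.cliqueFinset k, ∃ p q, p ∈ s ∧ q ∈ s ∧ H'.Adj p q ∧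
        α / C * (Fintype.card W : ℝ)^(k-2) ≤
          (((H'.cliqueFinset k).filter (fun t => p ∈ t ∧ q ∈ t)).card : ℝ))
    (α : ℝ) (hα : 0 < α) (hn1R : (1:ℝ) ≤ (Fintype.card V : ℝ))
    (hdeg' : ((2*(k:ℝ)-3)/(2*(k:ℝ)-1) + α) * (Fintype.card V:ℝ) ≤ (H.minDegree : ℝ))
    (hδn1 : (H.minDegree:ℝ) ≤ (Fintype.card V:ℝ) - 1)
    (s : Finset V) (hs : H.IsNClique (k+1) s)
    (u : V) (hdu : k ≤ (s.filter (fun v => H.Adj u v)).card) :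
    ∃ p q : V, p ∈ s ∧ q ∈ s ∧ H.Adj p q ∧
      α/C * ((Fintype.card V:ℝ)/3)^(k-2) ≤
        (((H.cliqueFinset (k+1)).filter (fun t => p ∈ t ∧ q ∈ t ∧ u ∈ t)).card : ℝ) := by
  have hkR : (3:ℝ) ≤ (k:ℝ) := by exact_mod_cast hk3
  have hD : (0:ℝ) < 2*(k:ℝ) - 1 := by linarith
  have hm : (H.minDegree : ℝ) ≤ (H.degree u : ℝ) := by exact_mod_cast H.minDegree_le_degree u
  have hmn : (H.degree u : ℝ) ≤ (Fintype.card V : ℝ) := by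
    exact_mod_cast le_of_lt (H.degree_lt_card_verts u)
  have hn0R : (0:ℝ) ≤ (Fintype.card V : ℝ) := by linarith
  have hm3 : (Fintype.card V:ℝ)/3 ≤ (H.degree u : ℝ) := by
    have h13 : (1:ℝ)/3 ≤ (2*(k:ℝ)-3)/(2*(k:ℝ)-1) := by
      rw [div_le_div_iff₀ (by norm_num) hD]
      linarith
    nlinarith [hdeg', mul_le_mul_of_nonneg_right h13 hn0R,
      mul_pos hα (lt_of_lt_of_le zero_lt_one hn1R)]
  obtain ⟨s₀, hs₀sub, hs₀card⟩ :=
    Finset.exists_subset_card_eq (s := s.filter (fun v => H.Adj u v)) (n := k) hdu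
  have hs₀A : ∀ x ∈ s₀, x ∈ H.neighborFinset u := by
    intro x hx
    exact (mem_neighborFinset H u x).mpr ((mem_filter.mp (hs₀sub hx)).2)
  have hs₀s : ∀ x ∈ s₀, x ∈ s := fun x hx => (mem_filter.mp (hs₀sub hx)).1
  let H' : SimpleGraph {x // x ∈ H.neighborFinset u} := H.comap Subtype.val
  haveI hdr : DecidableRel H'.Adj := fun a b => decidable_of_iff (H.Adj a.1 b.1) Iff.rfl
  have hcardT : (Fintype.card {x // x ∈ H.neighborFinset u} : ℝ) = (H.degree u : ℝ) := by
    norm_cast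
    rw [Fintype.card_coe]
    exact H.card_neighborFinset_eq_degree u
  set s₀' : Finset {x // x ∈ H.neighborFinset u} := s₀.subtype (fun x => x ∈ H.neighborFinset u)
    with hs₀'def
  have hs₀'card : s₀'.card = k := by
    rw [hs₀'def, Finset.card_subtype, Finset.filter_true_of_mem hs₀A, hs₀card]
  have hs₀'clique : H'.IsNClique k s₀' := by
    constructor
    · intro a ha b hb hne
      have ha' : (a:V) ∈ s₀ := Finset.mem_subtype.mp (Finset.mem_coe.mp ha)
      have hb' : (b:V) ∈ s₀ := Finset.mem_subtype.mp (Finset.mem_coe.mp hb)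
      have hvne : (a:V) ≠ (b:V) := fun h => hne (Subtype.coe_injective h)
      exact hs.1 (Finset.mem_coe.mpr (hs₀s _ ha')) (Finset.mem_coe.mpr (hs₀s _ hb')) hvne
    · exact hs₀'card
  have hs₀'ne : s₀'.Nonempty := by rw [← Finset.card_pos, hs₀'card]; omega
  haveI : Nonempty {x // x ∈ H.neighborFinset u} := ⟨hs₀'ne.choose⟩
  have hH'min : ((2*(k:ℝ)-5)/(2*(k:ℝ)-3) + α) *
      (Fintype.card {x // x ∈ H.neighborFinset u} : ℝ) ≤ (H'.minDegree : ℝ) := by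
    obtain ⟨w, hw⟩ := H'.exists_minimal_degree_vertex
    have hint : (H.neighborFinset u ∩ H.neighborFinset (w:V)).card ≤ H'.degree w := by
      rw [← card_neighborFinset_eq_degree]
      apply Finset.card_le_card_of_injOn
        (fun x => if hx : x ∈ H.neighborFinset u then (⟨x, hx⟩ : {y // y ∈ H.neighborFinset u})
          else w)
      · intro x hx
        have hxA : x ∈ H.neighborFinset u := (Finset.mem_inter.mp hx).1
        have hxB : x ∈ H.neighborFinset (w:V) := (Finset.mem_inter.mp hx).2
        simp only [Finset.mem_coe]
        rw [dif_pos hxA, mem_neighborFinset]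
        exact (mem_neighborFinset H (w:V) x).mp hxB
      · intro x hx y hy hxy
        have hxA : x ∈ H.neighborFinset u := (Finset.mem_inter.mp (Finset.mem_coe.mp hx)).1
        have hyA : y ∈ H.neighborFinset u := (Finset.mem_inter.mp (Finset.mem_coe.mp hy)).1
        simp only [dif_pos hxA, dif_pos hyA] at hxy
        exact congrArg Subtype.val hxy
    have hiu : (H.neighborFinset u ∩ H.neighborFinset (w:V)).card
        + (H.neighborFinset u ∪ H.neighborFinset (w:V)).card = H.degree u + H.degree (w:V) := by
      rw [Finset.card_inter_add_card_union]
      rw [card_neighborFinset_eq_degree, card_neighborFinset_eq_degree]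
    have hun : (H.neighborFinset u ∪ H.neighborFinset (w:V)).card ≤ Fintype.card V :=
      (Finset.card_le_univ _).trans (le_of_eq Finset.card_univ)
    have hwdeg : (H.minDegree : ℝ) ≤ (H.degree (w:V) : ℝ) := by
      exact_mod_cast H.minDegree_le_degree (w:V)
    have hkey : (H.degree u:ℝ) + (H.degree (w:V):ℝ) - (Fintype.card V:ℝ) ≤ (H'.degree w : ℝ) := by
      have h9 : H.degree u + H.degree (w:V) ≤ H'.degree w + Fintype.card V := by omega
      have h10 := (Nat.cast_le (α := ℝ)).mpr h9
      push_cast at h10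
      linarith
    have halg := alg_step (k:ℝ) (Fintype.card V:ℝ) (H.minDegree:ℝ) (H.degree u:ℝ) α
      hkR hn1R hα hdeg' hδn1 hm hmn
    rw [hcardT, hw]
    linarith
  obtain ⟨p', q', hp', hq', hadj', hcnt'⟩ :=
    IH {x // x ∈ H.neighborFinset u} H' α hα hH'min s₀' (mem_cliqueFinset_iff.mpr hs₀'clique)
  have hps : (p':V) ∈ s := hs₀s _ (Finset.mem_subtype.mp hp')
  have hqs : (q':V) ∈ s := hs₀s _ (Finset.mem_subtype.mp hq')
  have hadjpq : H.Adj (p':V) (q':V) := hadj'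
  refine ⟨(p':V), (q':V), hps, hqs, hadjpq, ?_⟩
  have hnotin : ∀ (t' : Finset {x // x ∈ H.neighborFinset u}), u ∉ t'.image Subtype.val := by
    intro t' hmem
    obtain ⟨x, _, hxe⟩ := Finset.mem_image.mp hmem
    have : H.Adj u (x:V) := (mem_neighborFinset H u (x:V)).mp x.2
    rw [hxe] at this
    exact H.irrefl this
  have hinj : (((H'.cliqueFinset k).filter (fun t => p' ∈ t ∧ q' ∈ t)).card : ℝ)
      ≤ (((H.cliqueFinset (k+1)).filter
          (fun t => (p':V) ∈ t ∧ (q':V) ∈ t ∧ u ∈ t)).card : ℝ) := by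
    have hmono := Finset.card_le_card_of_injOn
      (f := fun t' : Finset {x // x ∈ H.neighborFinset u} => insert u (t'.image Subtype.val))
      (s := (H'.cliqueFinset k).filter (fun t => p' ∈ t ∧ q' ∈ t))
      (t := (H.cliqueFinset (k+1)).filter (fun t => (p':V) ∈ t ∧ (q':V) ∈ t ∧ u ∈ t))
      ?_ ?_
    · exact_mod_cast hmono
    · intro t' ht'
      have ht'f := mem_filter.mp ht'
      have ht'c := mem_cliqueFinset_iff.mp ht'f.1
      have hclq : H.IsNClique k (t'.image Subtype.val) := by
        constructor
        · intro a ha b hb hne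
          obtain ⟨a', ha', rfl⟩ := Finset.mem_image.mp (Finset.mem_coe.mp ha)
          obtain ⟨b', hb', rfl⟩ := Finset.mem_image.mp (Finset.mem_coe.mp hb)
          have hne' : a' ≠ b' := fun h => hne (congrArg Subtype.val h)
          exact ht'c.1 (Finset.mem_coe.mpr ha') (Finset.mem_coe.mpr hb') hne'
        · rw [Finset.card_image_of_injective _ Subtype.val_injective, ht'c.2]
      have hins : H.IsNClique (k+1) (insert u (t'.image Subtype.val)) := by
        apply hclq.insert
        intro b hb
        obtain ⟨x, _, rfl⟩ := Finset.mem_image.mp hb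
        exact (mem_neighborFinset H u (x:V)).mp x.2
      simp only [Finset.mem_coe]
      rw [mem_filter]
      refine ⟨mem_cliqueFinset_iff.mpr hins, ?_, ?_, Finset.mem_insert_self u _⟩
      · exact Finset.mem_insert_of_mem (Finset.mem_image_of_mem _ ht'f.2.1)
      · exact Finset.mem_insert_of_mem (Finset.mem_image_of_mem _ ht'f.2.2)
    · intro t₁ h₁ t₂ h₂ heq
      have e1 : (insert u (t₁.image Subtype.val)).erase u = t₁.image Subtype.val :=
        Finset.erase_insert (hnotin t₁)
      have e2 : (insert u (t₂.image Subtype.val)).erase u = t₂.image Subtype.val :=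
        Finset.erase_insert (hnotin t₂)
      have heq' : insert u (t₁.image Subtype.val) = insert u (t₂.image Subtype.val) := heq
      have himg : t₁.image Subtype.val = t₂.image Subtype.val := by
        rw [← e1, ← e2, heq']
      exact Finset.image_injective Subtype.val_injective himg
  have hpow : ((Fintype.card V:ℝ)/3)^(k-2) ≤ (H.degree u:ℝ)^(k-2) :=
    pow_le_pow_left₀ (by positivity) hm3 _
  calc α/C * ((Fintype.card V:ℝ)/3)^(k-2)
      ≤ α/C * (H.degree u:ℝ)^(k-2) := by
        apply mul_le_mul_of_nonneg_left hpow (by positivity)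
    _ = α/C * (Fintype.card {x // x ∈ H.neighborFinset u} : ℝ)^(k-2) := by rw [hcardT]
    _ ≤ (((H'.cliqueFinset k).filter (fun t => p' ∈ t ∧ q' ∈ t)).card : ℝ) := hcnt'
    _ ≤ _ := hinj

lemma heavy : ∀ k : ℕ, 3 ≤ k →
    ∃ C : ℝ, 0 < C ∧
    ∀ (V : Type) [Fintype V] [DecidableEq V] (H : SimpleGraph V) [DecidableRel H.Adj],
    ∀ α : ℝ, 0 < α →
    ((2*(k:ℝ)-5)/(2*(k:ℝ)-3) + α) * (Fintype.card V : ℝ) ≤ (H.minDegree : ℝ) →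
    ∀ s ∈ H.cliqueFinset k, ∃ p q : V, p ∈ s ∧ q ∈ s ∧ H.Adj p q ∧
      α / C * (Fintype.card V : ℝ)^(k-2) ≤
        (((H.cliqueFinset k).filter (fun t => p ∈ t ∧ q ∈ t)).card : ℝ) := by
  intro k hk
  induction k, hk using Nat.le_induction with
  | base =>
    refine ⟨18, by norm_num, ?_⟩
    intro V _ _ H _ α hα hdeg s hs
    have hsclique := mem_cliqueFinset_iff.mp hs
    have hsc : s.card = 3 := hsclique.card_eq
    have hsne : s.Nonempty := by rw [← Finset.card_pos, hsc]; norm_num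
    have hn1 : 1 ≤ Fintype.card V := Fintype.card_pos_iff.mpr ⟨hsne.choose⟩
    have hn1R : (1:ℝ) ≤ (Fintype.card V : ℝ) := by exact_mod_cast hn1
    have hdeg' : (1/3 + α) * (Fintype.card V:ℝ) ≤ (H.minDegree : ℝ) := by
      have e : ((2*((3:ℕ):ℝ)-5)/(2*((3:ℕ):ℝ)-3) + α) = (1/3 + α) := by norm_num
      rw [e] at hdeg
      exact hdeg
    set Z := univ.filter (fun z => 3 - 1 ≤ (s.filter (fun v => H.Adj z v)).card) with hZdef
    have hdegsum := degSum H 3 (by norm_num) s hsc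
    rw [← hZdef] at hdegsum
    have hZcard : 3/2 * α * (Fintype.card V:ℝ) ≤ (Z.card : ℝ) := by
      push_cast at hdegsum
      nlinarith [hdegsum, hdeg']
    have hZne : Z.Nonempty := by
      rw [← Finset.card_pos]
      have h0 : (0:ℝ) < (Z.card : ℝ) :=
        lt_of_lt_of_le (by positivity) hZcard
      exact_mod_cast h0
    have hB : ∀ u ∈ Z, ∃ p q : V, p ∈ s ∧ q ∈ s ∧ H.Adj p q ∧
        (1:ℝ) ≤ (((H.cliqueFinset 3).filter (fun t => p ∈ t ∧ q ∈ t ∧ u ∈ t)).card : ℝ) := by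
      intro u hu
      have hu2 : 1 < (s.filter (fun v => H.Adj u v)).card := by
        have := (mem_filter.mp hu).2
        omega
      obtain ⟨p, hpmem, q, hqmem, hpq⟩ := Finset.one_lt_card.mp hu2
      have hp : p ∈ s := (mem_filter.mp hpmem).1
      have hq : q ∈ s := (mem_filter.mp hqmem).1
      have hup : H.Adj u p := (mem_filter.mp hpmem).2
      have huq : H.Adj u q := (mem_filter.mp hqmem).2
      have hAdjpq : H.Adj p q := hsclique.1 (Finset.mem_coe.mpr hp) (Finset.mem_coe.mpr hq) hpq
      have htri : H.IsNClique 3 ({p, q, u} : Finset V) :=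
        is3Clique_triple_iff.mpr ⟨hAdjpq, hup.symm, huq.symm⟩
      refine ⟨p, q, hp, hq, hAdjpq, ?_⟩
      have hmem : ({p, q, u} : Finset V) ∈
          ((H.cliqueFinset 3).filter (fun t => p ∈ t ∧ q ∈ t ∧ u ∈ t)) := by
        rw [mem_filter]
        exact ⟨mem_cliqueFinset_iff.mpr htri, by simp, by simp, by simp⟩
      have hpos := Finset.card_pos.mpr ⟨_, hmem⟩
      exact_mod_cast hpos
    obtain ⟨p, q, hp, hq, hadj, hfinal⟩ := pigeon H 3 s Z hZne hsne 1 (by norm_num) hB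
    refine ⟨p, q, hp, hq, hadj, ?_⟩
    rw [hsc] at hfinal
    push_cast at hfinal
    have he : ((Fintype.card V):ℝ)^(3-2) = (Fintype.card V : ℝ) := by norm_num
    rw [he]
    nlinarith [hZcard, hfinal]
  | succ k hk ih =>
    obtain ⟨C, hC, IH⟩ := ih
    have hkR : (3:ℝ) ≤ (k:ℝ) := by exact_mod_cast hk
    have hD : (0:ℝ) < 2*(k:ℝ) - 1 := by linarith
    have hb : (0:ℝ) < 2*(k:ℝ) - 3 := by linarith
    refine ⟨C * (2*(k:ℝ)-1) * 3^(k-2) * ((k:ℝ)+1)^3, by positivity, ?_⟩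
    intro V _ _ H _ α hα hdeg s hs
    have hsclique := mem_cliqueFinset_iff.mp hs
    have hsc : s.card = k + 1 := hsclique.card_eq
    have hsne : s.Nonempty := by rw [← Finset.card_pos, hsc]; omega
    obtain ⟨v₀, hv₀⟩ := hsne
    have hsne : s.Nonempty := ⟨v₀, hv₀⟩
    have hn1 : 1 ≤ Fintype.card V := Fintype.card_pos_iff.mpr ⟨v₀⟩
    have hn1R : (1:ℝ) ≤ (Fintype.card V:ℝ) := by exact_mod_cast hn1
    have hn0R : (0:ℝ) ≤ (Fintype.card V:ℝ) := by linarith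
    have hdeg' : ((2*(k:ℝ)-3)/(2*(k:ℝ)-1) + α) * (Fintype.card V:ℝ) ≤ (H.minDegree:ℝ) := by
      have e2 : 2*((k:ℝ)+1)-5 = 2*(k:ℝ)-3 := by ring
      have e3 : 2*((k:ℝ)+1)-3 = 2*(k:ℝ)-1 := by ring
      push_cast at hdeg
      rw [e2, e3] at hdeg
      exact hdeg
    have hδn1 : (H.minDegree:ℝ) ≤ (Fintype.card V:ℝ) - 1 := by
      have h1 : H.minDegree + 1 ≤ Fintype.card V := by
        have := lt_of_le_of_lt (H.minDegree_le_degree v₀) (H.degree_lt_card_verts v₀)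
        omega
      have h2 : (H.minDegree : ℝ) + 1 ≤ (Fintype.card V : ℝ) := by exact_mod_cast h1
      linarith
    set Z := univ.filter (fun z => (k+1) - 1 ≤ (s.filter (fun v => H.Adj z v)).card) with hZdef
    have hdegsum := degSum H (k+1) (by omega) s hsc
    rw [← hZdef] at hdegsum
    have hZcard : (Fintype.card V:ℝ)/(2*(k:ℝ)-1) ≤ (Z.card:ℝ) := by
      push_cast at hdegsum
      have h2Z : ((k:ℝ)+1)*(H.minDegree:ℝ) - ((k:ℝ)-1)*(Fintype.card V:ℝ) ≤ 2*(Z.card:ℝ) := by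
        linarith
      have hstep : ((2*(k:ℝ)-3)/(2*(k:ℝ)-1)) * (Fintype.card V:ℝ)
          ≤ (H.minDegree:ℝ) - α*(Fintype.card V:ℝ) := by nlinarith [hdeg']
      have e : ((k:ℝ)+1)*(((2*(k:ℝ)-3)/(2*(k:ℝ)-1))*(Fintype.card V:ℝ))
          - ((k:ℝ)-1)*(Fintype.card V:ℝ)
          = ((2*(k:ℝ)-4)/(2*(k:ℝ)-1))*(Fintype.card V:ℝ) := by
        have hD' : 2*(k:ℝ)-1 ≠ 0 := hD.ne'
        have hinv : (2*(k:ℝ)-1) * (2*(k:ℝ)-1)⁻¹ = 1 := mul_inv_cancel₀ hD'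
        simp only [div_eq_mul_inv]
        linear_combination ((k:ℝ)-1)*(Fintype.card V:ℝ) * hinv
      have h4 : 2*((Fintype.card V:ℝ)/(2*(k:ℝ)-1))
          ≤ ((2*(k:ℝ)-4)/(2*(k:ℝ)-1))*(Fintype.card V:ℝ) := by
        rw [div_mul_eq_mul_div, mul_div_assoc', div_le_div_iff₀ hD hD]
        nlinarith [mul_nonneg (mul_nonneg (show (0:ℝ) ≤ 2*(k:ℝ)-6 by linarith) hn0R)
          (le_of_lt hD)]
      have h5 : ((k:ℝ)+1)*(((2*(k:ℝ)-3)/(2*(k:ℝ)-1))*(Fintype.card V:ℝ))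
          ≤ ((k:ℝ)+1)*((H.minDegree:ℝ) - α*(Fintype.card V:ℝ)) :=
        mul_le_mul_of_nonneg_left hstep (by linarith)
      have h6 : ((k:ℝ)+1)*α*(Fintype.card V:ℝ) ≥ 0 := by positivity
      linarith
    have hZne : Z.Nonempty := by
      rw [← Finset.card_pos]
      have h0 : (0:ℝ) < (Z.card : ℝ) :=
        lt_of_lt_of_le (by positivity) hZcard
      exact_mod_cast h0
    set B : ℝ := α/C * ((Fintype.card V:ℝ)/3)^(k-2) with hBdef
    have hB0 : 0 ≤ B := by positivity
    have hBmain : ∀ u ∈ Z, ∃ p q : V, p ∈ s ∧ q ∈ s ∧ H.Adj p q ∧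
        B ≤ (((H.cliqueFinset (k+1)).filter (fun t => p ∈ t ∧ q ∈ t ∧ u ∈ t)).card : ℝ) := by
      intro u hu
      have hdu : k ≤ (s.filter (fun v => H.Adj u v)).card := by
        have := (mem_filter.mp hu).2
        omega
      exact step_inner H k hk C hC IH α hα hn1R hdeg' hδn1 s hsclique u hdu
    obtain ⟨p, q, hp, hq, hadj, hfinal⟩ := pigeon H (k+1) s Z hZne hsne B hB0 hBmain
    refine ⟨p, q, hp, hq, hadj, ?_⟩
    rw [hsc] at hfinal
    set cnt := (((H.cliqueFinset (k+1)).filter (fun t => p ∈ t ∧ q ∈ t)).card : ℝ) with hcntdef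
    have hcnt0 : 0 ≤ cnt := by positivity
    have hfinal' : (Z.card : ℝ) * B ≤ ((k:ℝ)+1)^3 * cnt := by
      have e : ((k+1:ℕ):ℝ)^2 * ((k+1:ℕ):ℝ) = ((k:ℝ)+1)^3 := by push_cast; ring
      calc (Z.card : ℝ) * B ≤ ((k+1:ℕ):ℝ)^2 * ((k+1:ℕ):ℝ) * cnt := hfinal
        _ = ((k:ℝ)+1)^3 * cnt := by rw [e]
    have hexp : k + 1 - 2 = k - 1 := by omega
    rw [hexp]
    have hpowsplit : (Fintype.card V:ℝ)^(k-1) = (Fintype.card V:ℝ)^(k-2) * (Fintype.card V:ℝ) := by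
      rw [← pow_succ]
      congr 1
      omega
    have hchain : (Fintype.card V:ℝ)/(2*(k:ℝ)-1) * B ≤ ((k:ℝ)+1)^3 * cnt :=
      le_trans (mul_le_mul_of_nonneg_right hZcard hB0) hfinal'
    have hlhs : (Fintype.card V:ℝ)/(2*(k:ℝ)-1) * B
        = α * (Fintype.card V:ℝ)^(k-1) / ((2*(k:ℝ)-1) * C * 3^(k-2)) := by
      rw [hBdef, div_pow, hpowsplit]
      field_simp
    rw [hlhs] at hchain
    rw [div_mul_eq_mul_div, div_le_iff₀ (by positivity)]
    rw [div_le_iff₀ (by positivity)] at hchain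
    calc α * (Fintype.card V:ℝ)^(k-1) ≤ ((k:ℝ)+1)^3 * cnt * ((2*(k:ℝ)-1) * C * 3^(k-2)) := hchain
      _ = cnt * (C * (2*(k:ℝ)-1) * 3^(k-2) * ((k:ℝ)+1)^3) := by ring

theorem clique_removal_above_threshold (r : ℕ) (hr : 3 ≤ r) :
    ∃ μ : ℝ, 0 < μ ∧
      ∀ (α ε : ℝ), 0 < α → 0 < ε →
        ∀ (V : Type) [Fintype V] [DecidableEq V] (G : SimpleGraph V)
          [DecidableRel G.Adj] (n : ℕ),
          Fintype.card V = n →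
          ((2 * (r : ℝ) - 5) / (2 * r - 3) + α) * n ≤ G.minDegree →
          ((G.cliqueFinset r).card : ℝ) ≤ μ * α * ε * (n : ℝ) ^ r →
          ∃ E : Finset (Sym2 V), E ⊆ G.edgeFinset ∧ (E.card : ℝ) ≤ ε * (n : ℝ) ^ 2 ∧
            (G.deleteEdges ↑E).CliqueFree r := by
  obtain ⟨C, hC, HV⟩ := heavy r hr
  have hr0 : 0 < r := by omega
  refine ⟨1 / (C * (r:ℝ)^2), by positivity, ?_⟩
  intro α ε hα hε V _ _ G _ n hcard hdeg hcnt
  rcases Nat.eq_zero_or_pos n with hn0 | hn1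
  · -- empty graph
    refine ⟨∅, by simp, by simp [hn0], ?_⟩
    intro t ht
    have h1 : t.card = r := ht.card_eq
    have h2 : t.card ≤ Fintype.card V := Finset.card_le_univ t |>.trans (le_of_eq Finset.card_univ)
    omega
  · have hn1R : (1:ℝ) ≤ (n:ℝ) := by exact_mod_cast hn1
    set T : ℝ := α / C * (n:ℝ)^(r-2) with hTdef
    have hT0 : 0 < T := by positivity
    set E : Finset (Sym2 V) := G.edgeFinset.filter
      (fun e => T ≤ (((G.cliqueFinset r).filter (fun t => ∀ x ∈ e, x ∈ t)).card : ℝ)) with hEdef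
    have hEsub : E ⊆ G.edgeFinset := filter_subset _ _
    -- the key property from heavy: every r-clique contains a heavy edge
    have hkey : ∀ s ∈ G.cliqueFinset r, ∃ p q : V, p ∈ s ∧ q ∈ s ∧ G.Adj p q ∧
        s(p, q) ∈ E := by
      intro s hs
      have hdeg' : ((2*(r:ℝ)-5)/(2*(r:ℝ)-3) + α) * (Fintype.card V : ℝ) ≤ (G.minDegree : ℝ) := by
        rw [hcard]
        exact hdeg
      obtain ⟨p, q, hp, hq, hadj, hcnt'⟩ := HV V G α hα hdeg' s hs
      refine ⟨p, q, hp, hq, hadj, ?_⟩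
      rw [hEdef, mem_filter]
      constructor
      · rw [mem_edgeFinset]
        exact hadj
      · have hfe : ((G.cliqueFinset r).filter (fun t => ∀ x ∈ s(p,q), x ∈ t))
            = (G.cliqueFinset r).filter (fun t => p ∈ t ∧ q ∈ t) := by
          apply Finset.filter_congr
          intro t _
          constructor
          · intro h
            exact ⟨h p (by simp), h q (by simp)⟩
          · intro h x hx
            rcases Sym2.mem_iff.mp hx with rfl | rfl
            · exact h.1
            · exact h.2
        rw [hfe]
        rw [hcard] at hcnt'
        exact hcnt'
    -- clique-freeness after deletion
    refine ⟨E, hEsub, ?_, ?_⟩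
    · -- cardinality bound
      have hsum1 : (E.card : ℝ) * T ≤
          ∑ e ∈ E, (((G.cliqueFinset r).filter (fun t => ∀ x ∈ e, x ∈ t)).card : ℝ) := by
        have := Finset.card_nsmul_le_sum E
          (fun e => (((G.cliqueFinset r).filter (fun t => ∀ x ∈ e, x ∈ t)).card : ℝ)) T
          (fun e he => (mem_filter.mp he).2)
        simpa only [nsmul_eq_mul] using this
      have hsum2 : ∑ e ∈ E, (((G.cliqueFinset r).filter (fun t => ∀ x ∈ e, x ∈ t)).card)
          ≤ (G.cliqueFinset r).card * (r * r) := by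
        have e1 : ∀ e : Sym2 V, (((G.cliqueFinset r).filter (fun t => ∀ x ∈ e, x ∈ t)).card)
            = ∑ t ∈ G.cliqueFinset r, if ∀ x ∈ e, x ∈ t then 1 else 0 := by
          intro e; rw [Finset.card_filter]
        calc ∑ e ∈ E, (((G.cliqueFinset r).filter (fun t => ∀ x ∈ e, x ∈ t)).card)
            = ∑ t ∈ G.cliqueFinset r, ∑ e ∈ E, (if ∀ x ∈ e, x ∈ t then 1 else 0) := by
              simp_rw [e1]
              exact Finset.sum_comm
          _ ≤ ∑ t ∈ G.cliqueFinset r, (r * r) := by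
              apply Finset.sum_le_sum
              intro t ht
              rw [← Finset.card_filter]
              have hsub2 : E.filter (fun e => ∀ x ∈ e, x ∈ t) ⊆ t.sym2 := by
                intro e he
                exact Finset.mem_sym2_iff.mpr (mem_filter.mp he).2
              calc (E.filter (fun e => ∀ x ∈ e, x ∈ t)).card ≤ t.sym2.card :=
                    card_le_card hsub2
                _ = (t.card + 1).choose 2 := Finset.card_sym2 t
                _ = (r + 1).choose 2 := by rw [(mem_cliqueFinset_iff.mp ht).card_eq]
                _ = (r + 1) * r / 2 := by rw [Nat.choose_two_right, Nat.add_sub_cancel]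
                _ ≤ r * r := by
                    have : (r+1) * r ≤ 2 * (r * r) := by nlinarith [hr0]
                    omega
          _ = (G.cliqueFinset r).card * (r * r) := by
              rw [Finset.sum_const, smul_eq_mul]
      have hsum2R : (∑ e ∈ E, (((G.cliqueFinset r).filter (fun t => ∀ x ∈ e, x ∈ t)).card : ℝ))
          ≤ ((G.cliqueFinset r).card : ℝ) * ((r:ℝ) * r) := by
        have := (Nat.cast_le (α := ℝ)).mpr hsum2
        push_cast at this
        exact this
      have hchain : (E.card : ℝ) * T ≤ (r:ℝ)^2 * (1 / (C * (r:ℝ)^2) * α * ε * (n:ℝ)^r) := by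
        calc (E.card : ℝ) * T ≤ ((G.cliqueFinset r).card : ℝ) * ((r:ℝ)*r) :=
              le_trans hsum1 hsum2R
          _ ≤ (1 / (C * (r:ℝ)^2) * α * ε * (n:ℝ)^r) * ((r:ℝ)*r) := by
              apply mul_le_mul_of_nonneg_right hcnt (by positivity)
          _ = (r:ℝ)^2 * (1 / (C * (r:ℝ)^2) * α * ε * (n:ℝ)^r) := by ring
      have hpowsplit : (n:ℝ)^r = (n:ℝ)^(r-2) * (n:ℝ)^2 := by
        rw [← pow_add]
        congr 1
        omega
      have hsimp : (r:ℝ)^2 * (1 / (C * (r:ℝ)^2) * α * ε * (n:ℝ)^r)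
          = T * (ε * (n:ℝ)^2) := by
        rw [hTdef, hpowsplit]
        have hrR : (0:ℝ) < (r:ℝ) := by exact_mod_cast hr0
        field_simp
      rw [hsimp] at hchain
      have := le_of_mul_le_mul_right (by linarith [hchain] : (E.card:ℝ) * T ≤ (ε * (n:ℝ)^2) * T) hT0
      linarith [this]
    · -- clique-free
      intro t ht
      have htG : G.IsNClique r t := ht.mono (G.deleteEdges_le _)
      obtain ⟨p, q, hp, hq, hadj, hpqE⟩ := hkey t (mem_cliqueFinset_iff.mpr htG)
      have hadj' : (G.deleteEdges ↑E).Adj p q :=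
        ht.1 (Finset.mem_coe.mpr hp) (Finset.mem_coe.mpr hq) hadj.ne
      rw [SimpleGraph.deleteEdges_adj] at hadj'
      exact hadj'.2 (Finset.mem_coe.mpr hpqE)
end

section
/- Let H₀ be a graph and H = H₀ × K₃ the tensor product with K₃. Suppose E* ⊆ E(H) is a set of edges whose deletion makes H triangle-free. Let E₀* ⊆ E(H₀) be the set of edges {v,w} such that some edge of E* has the form {(v,x),(w,y)}. Then deleting E₀* from H₀ makes H₀ triangle-free, and |E₀*| ≤ |E*|. -/
open Finset SimpleGraph
open scoped Classical

/-- The tensor (categorical) product of a graph with `K₃`. -/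
def tensorK3 {V : Type*} (H : SimpleGraph V) : SimpleGraph (V × Fin 3) where
  Adj a b := a.2 ≠ b.2 ∧ H.Adj a.1 b.1
  symm := by
    constructor
    intro a b h
    exact ⟨Ne.symm h.1, h.2.symm⟩
  loopless := by
    constructor
    intro a h
    exact h.1 rfl

theorem tensorK3_edge_deletion {V : Type*} [Fintype V] [DecidableEq V]
    (H₀ : SimpleGraph V) [DecidableRel H₀.Adj]
    (E : Finset (Sym2 (V × Fin 3))) (hE : E ⊆ (tensorK3 H₀).edgeFinset)
    (hdel : ((tensorK3 H₀).deleteEdges ↑E).CliqueFree 3) :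
    (H₀.deleteEdges ↑(E.image (Sym2.map Prod.fst))).CliqueFree 3 ∧
      (E.image (Sym2.map Prod.fst)).card ≤ E.card := by
  refine ⟨?_, Finset.card_image_le⟩
  intro t ht
  obtain ⟨a, b, c, hab, hac, hbc, rfl⟩ := is3Clique_iff.1 ht
  apply hdel {(a, 0), (b, 1), (c, 2)}
  rw [is3Clique_iff]
  refine ⟨(a, 0), (b, 1), (c, 2), ?_, ?_, ?_, rfl⟩ <;>
    rw [deleteEdges_adj] <;>
    [ refine ⟨⟨by simp, (deleteEdges_adj.1 hab).1⟩, fun hmem => (deleteEdges_adj.1 hab).2 ?_⟩;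
      refine ⟨⟨by simp, (deleteEdges_adj.1 hac).1⟩, fun hmem => (deleteEdges_adj.1 hac).2 ?_⟩;
      refine ⟨⟨by simp, (deleteEdges_adj.1 hbc).1⟩, fun hmem => (deleteEdges_adj.1 hbc).2 ?_⟩] <;>
    · simp only [Finset.coe_image, Set.mem_image]
      exact ⟨_, hmem, rfl⟩
end

section
/- Let H₀ be a graph on n₀ vertices, s ≥ 1 an integer, and let H₀[s] denote the balanced blowup of H₀ with each vertex replaced by s copies. If H₀ has fewer than δ·n₀³ triangles, then H₀[s] has fewer than δ·(s·n₀)³ triangles; and if at least ε·n₀² edges must be deleted from H₀ to make it triangle-free, then at least ε·(s·n₀)² edges must be deleted from H₀[s] to make it triangle-free. -/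
open Finset SimpleGraph
open scoped Classical

/-- The balanced blowup of a graph, replacing every vertex by `s` copies. -/
def graphBlowup {V : Type*} (H : SimpleGraph V) (s : ℕ) : SimpleGraph (V × Fin s) where
  Adj a b := H.Adj a.1 b.1
  symm := ⟨fun _ _ h => H.adj_symm h⟩
  loopless := ⟨fun _ h => H.irrefl h⟩

section Aux

variable {V₀ : Type*} [Fintype V₀] [DecidableEq V₀] {s : ℕ}

lemma proj_triangle (H₀ : SimpleGraph V₀) [DecidableRel H₀.Adj] {T : Finset (V₀ × Fin s)}
    (hT : T ∈ (graphBlowup H₀ s).cliqueFinset 3) :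
    T.image Prod.fst ∈ H₀.cliqueFinset 3 := by
  rw [mem_cliqueFinset_iff, is3Clique_iff] at hT ⊢
  obtain ⟨a, b, c, hab, hac, hbc, rfl⟩ := hT
  exact ⟨a.1, b.1, c.1, hab, hac, hbc, by simp⟩

lemma fst_injOn (H₀ : SimpleGraph V₀) [DecidableRel H₀.Adj] {T : Finset (V₀ × Fin s)}
    (hT : T ∈ (graphBlowup H₀ s).cliqueFinset 3) :
    ∀ a ∈ T, ∀ b ∈ T, a.1 = b.1 → a = b := by
  intro a ha b hb hab
  by_contra hne
  have := (mem_cliqueFinset_iff.mp hT).1 ha hb hne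
  exact (H₀.ne_of_adj this) hab

lemma lifts_card_le (hs : 1 ≤ s) (H₀ : SimpleGraph V₀) [DecidableRel H₀.Adj]
    (S : Finset V₀) (hS : S ∈ H₀.cliqueFinset 3) :
    ((((graphBlowup H₀ s).cliqueFinset 3).filter (fun T => T.image Prod.fst = S)).card : ℕ)
      ≤ s ^ 3 := by
  classical
  have hS3 : S.card = 3 := (mem_cliqueFinset_iff.mp hS).2
  set F := ((graphBlowup H₀ s).cliqueFinset 3).filter (fun T => T.image Prod.fst = S) with hF
  set g : Finset (V₀ × Fin s) → (↥S → Fin s) := fun T v =>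
    if h : ∃ a, a ∈ T ∧ a.1 = (v : V₀) then h.choose.2 else ⟨0, hs⟩ with hg
  have key : ∀ T ∈ F, ∀ a ∈ T, ∀ (hv : (a.1 : V₀) ∈ S), g T ⟨a.1, hv⟩ = a.2 := by
    intro T hT a ha hv
    have hT' := mem_filter.mp hT
    have hex : ∃ b, b ∈ T ∧ b.1 = a.1 := ⟨a, ha, rfl⟩
    have hch := hex.choose_spec
    have : hex.choose = a := fst_injOn H₀ hT'.1 _ hch.1 _ ha hch.2
    simp only [hg, dif_pos hex, this]
  have hsub : ∀ T₁ ∈ F, ∀ T₂ ∈ F, g T₁ = g T₂ → T₁ ⊆ T₂ := by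
    intro T₁ h₁ T₂ h₂ hgeq a ha
    have h₁' := mem_filter.mp h₁
    have h₂' := mem_filter.mp h₂
    have hv : (a.1 : V₀) ∈ S := by
      rw [← h₁'.2]; exact mem_image_of_mem _ ha
    have hv2 : (a.1 : V₀) ∈ T₂.image Prod.fst := by rw [h₂'.2]; exact hv
    obtain ⟨b, hb, hba⟩ := mem_image.mp hv2
    have hex : ∃ c, c ∈ T₂ ∧ c.1 = a.1 := ⟨b, hb, hba⟩
    have h1 : g T₁ ⟨a.1, hv⟩ = a.2 := key T₁ h₁ a ha hv
    have h2 : g T₂ ⟨b.1, hba ▸ hv⟩ = b.2 := key T₂ h₂ b hb _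
    have : a = b := by
      have : a.2 = b.2 := by
        rw [← h1, hgeq]
        have : (⟨a.1, hv⟩ : ↥S) = ⟨b.1, hba ▸ hv⟩ := by simp [hba]
        rw [this, h2]
      exact Prod.ext hba.symm this
    exact this ▸ hb
  have hinj : Set.InjOn g ↑F := by
    intro T₁ h₁ T₂ h₂ hgeq
    rw [mem_coe] at h₁ h₂
    exact Finset.Subset.antisymm (hsub T₁ h₁ T₂ h₂ hgeq) (hsub T₂ h₂ T₁ h₁ hgeq.symm)
  calc F.card ≤ (univ : Finset (↥S → Fin s)).card :=
        Finset.card_le_card_of_injOn g (fun _ _ => mem_univ _) hinj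
    _ = s ^ 3 := by
        rw [card_univ, Fintype.card_fun]
        simp [Fintype.card_coe, hS3]

lemma part1_nat (hs : 1 ≤ s) (H₀ : SimpleGraph V₀) [DecidableRel H₀.Adj] :
    ((graphBlowup H₀ s).cliqueFinset 3).card ≤ (H₀.cliqueFinset 3).card * s ^ 3 := by
  classical
  have hsub : (graphBlowup H₀ s).cliqueFinset 3 ⊆
      (H₀.cliqueFinset 3).biUnion (fun S =>
        ((graphBlowup H₀ s).cliqueFinset 3).filter fun T => T.image Prod.fst = S) := by
    intro T hT
    exact mem_biUnion.2 ⟨T.image Prod.fst, proj_triangle _ hT, mem_filter.2 ⟨hT, rfl⟩⟩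
  calc ((graphBlowup H₀ s).cliqueFinset 3).card ≤ _ := Finset.card_le_card hsub
    _ ≤ ∑ S ∈ H₀.cliqueFinset 3,
        (((graphBlowup H₀ s).cliqueFinset 3).filter fun T => T.image Prod.fst = S).card :=
        Finset.card_biUnion_le
    _ ≤ ∑ _S ∈ H₀.cliqueFinset 3, s ^ 3 :=
        Finset.sum_le_sum (fun S hS => lifts_card_le hs H₀ S hS)
    _ = (H₀.cliqueFinset 3).card * s ^ 3 := by rw [Finset.sum_const, smul_eq_mul]

lemma card_fixed_two {x y : V₀} (hxy : x ≠ y) (i j : Fin s) :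
    ((univ : Finset (V₀ → Fin s)).filter (fun σ => σ x = i ∧ σ y = j)).card
      ≤ s ^ (Fintype.card V₀ - 2) := by
  classical
  have hcardsub : Fintype.card {v : V₀ // v ≠ x ∧ v ≠ y} = Fintype.card V₀ - 2 := by
    rw [Fintype.card_subtype]
    have : (univ : Finset V₀).filter (fun v => v ≠ x ∧ v ≠ y) = univ \ {x, y} := by
      ext v; simp [not_or]
    rw [this, card_sdiff_of_subset (subset_univ _), card_univ]
    congr 1
    rw [card_insert_of_notMem (by simp [hxy]), card_singleton]
  have hle : ((univ : Finset (V₀ → Fin s)).filter (fun σ => σ x = i ∧ σ y = j)).card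
      ≤ (univ : Finset ({v : V₀ // v ≠ x ∧ v ≠ y} → Fin s)).card := by
    apply Finset.card_le_card_of_injOn (fun σ v => σ v.1) (fun _ _ => mem_univ _)
    intro σ₁ h₁ σ₂ h₂ heq
    simp only [coe_filter, Set.mem_setOf_eq] at h₁ h₂
    funext v
    by_cases hvx : v = x
    · rw [hvx, h₁.2.1, h₂.2.1]
    · by_cases hvy : v = y
      · rw [hvy, h₁.2.2, h₂.2.2]
      · exact congrFun heq ⟨v, hvx, hvy⟩
  calc _ ≤ _ := hle
    _ = s ^ (Fintype.card V₀ - 2) := by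
        rw [card_univ, Fintype.card_fun, hcardsub, Fintype.card_fin]

/-- The condition that an edge of the blowup lies on the "copy of `H₀`" given by `σ`. -/
def matches' (σ : V₀ → Fin s) (f : Sym2 (V₀ × Fin s)) : Prop :=
  ¬ f.IsDiag ∧ Sym2.map (fun v => (v, σ v)) (Sym2.map Prod.fst f) = f

lemma card_matches_le (f : Sym2 (V₀ × Fin s)) :
    ((univ : Finset (V₀ → Fin s)).filter (fun σ => matches' σ f)).card
      ≤ s ^ (Fintype.card V₀ - 2) := by
  classical
  induction f using Sym2.inductionOn with
  | hf a b =>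
    by_cases hab : a.1 = b.1
    · have : ((univ : Finset (V₀ → Fin s)).filter (fun σ => matches' σ s(a, b))) = ∅ := by
        rw [Finset.filter_eq_empty_iff]
        intro σ _
        rintro ⟨hd, hm⟩
        simp only [Sym2.map_pair_eq] at hm
        rw [Sym2.eq_iff] at hm
        apply hd
        rw [Sym2.mk_isDiag_iff]
        rcases hm with ⟨h1, h2⟩ | ⟨h1, h2⟩
        · calc a = (a.1, σ a.1) := h1.symm
            _ = (b.1, σ b.1) := by rw [hab]
            _ = b := h2
        · calc a = (b.1, σ b.1) := h2.symm
            _ = (a.1, σ a.1) := by rw [hab]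
            _ = b := h1
      rw [this]; simp
    · have hsub : ((univ : Finset (V₀ → Fin s)).filter (fun σ => matches' σ s(a, b)))
          ⊆ ((univ : Finset (V₀ → Fin s)).filter (fun σ => σ a.1 = a.2 ∧ σ b.1 = b.2)) := by
        intro σ hσ
        rw [mem_filter] at hσ ⊢
        refine ⟨mem_univ _, ?_⟩
        obtain ⟨_, hm⟩ := hσ.2
        simp only [Sym2.map_pair_eq] at hm
        rw [Sym2.eq_iff] at hm
        rcases hm with ⟨h1, h2⟩ | ⟨h1, h2⟩
        · exact ⟨(Prod.ext_iff.mp h1).2, (Prod.ext_iff.mp h2).2⟩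
        · exact absurd (Prod.ext_iff.mp h1).1 hab
      calc _ ≤ _ := Finset.card_le_card hsub
        _ ≤ s ^ (Fintype.card V₀ - 2) := card_fixed_two hab a.2 b.2

lemma pullback_cliqueFree (H₀ : SimpleGraph V₀) [DecidableRel H₀.Adj]
    (E : Finset (Sym2 (V₀ × Fin s)))
    (hE : ((graphBlowup H₀ s).deleteEdges ↑E).CliqueFree 3) (σ : V₀ → Fin s) :
    (H₀.deleteEdges ↑((E.filter (matches' σ)).image (Sym2.map Prod.fst))).CliqueFree 3 := by
  classical
  intro t ht
  rw [is3Clique_iff] at ht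
  obtain ⟨x, y, z, hxy, hxz, hyz, rfl⟩ := ht
  have key : ∀ {u v : V₀}, (H₀.deleteEdges
      ↑((E.filter (matches' σ)).image (Sym2.map Prod.fst))).Adj u v →
      ((graphBlowup H₀ s).deleteEdges ↑E).Adj (u, σ u) (v, σ v) := by
    intro u v huv
    rw [deleteEdges_adj] at huv ⊢
    refine ⟨huv.1, ?_⟩
    intro hmem
    apply huv.2
    rw [mem_coe, mem_image]
    refine ⟨s((u, σ u), (v, σ v)), ?_, by rw [Sym2.map_pair_eq]⟩
    rw [mem_filter]
    refine ⟨hmem, ?_, ?_⟩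
    · rw [Sym2.mk_isDiag_iff]
      intro h
      exact H₀.ne_of_adj huv.1 (Prod.ext_iff.mp h).1
    · simp [Sym2.map_pair_eq]
  exact hE {(x, σ x), (y, σ y), (z, σ z)}
    (is3Clique_triple_iff.mpr ⟨key hxy, key hxz, key hyz⟩)

end Aux

theorem blowup_preserves_removal (n₀ s : ℕ) (hs : 1 ≤ s) (ε δ : ℝ)
    {V₀ : Type*} [Fintype V₀] [DecidableEq V₀]
    (H₀ : SimpleGraph V₀) [DecidableRel H₀.Adj] (hcard : Fintype.card V₀ = n₀)
    (htri : ((H₀.cliqueFinset 3).card : ℝ) < δ * (n₀ : ℝ) ^ 3)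
    (hdel : ∀ E : Finset (Sym2 V₀),
      (H₀.deleteEdges ↑E).CliqueFree 3 → ε * (n₀ : ℝ) ^ 2 ≤ E.card) :
    (((graphBlowup H₀ s).cliqueFinset 3).card : ℝ) < δ * ((s * n₀ : ℕ) : ℝ) ^ 3 ∧
      ∀ E : Finset (Sym2 (V₀ × Fin s)),
        ((graphBlowup H₀ s).deleteEdges ↑E).CliqueFree 3 →
          ε * ((s * n₀ : ℕ) : ℝ) ^ 2 ≤ E.card := by
  classical
  have hs0 : (0 : ℝ) < (s : ℝ) := by exact_mod_cast hs
  constructor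
  · -- triangle counting
    have hb : (((graphBlowup H₀ s).cliqueFinset 3).card : ℝ)
        ≤ ((H₀.cliqueFinset 3).card : ℝ) * (s : ℝ) ^ 3 := by
      exact_mod_cast part1_nat hs H₀
    have hs3 : (0 : ℝ) < (s : ℝ) ^ 3 := by positivity
    calc (((graphBlowup H₀ s).cliqueFinset 3).card : ℝ)
        ≤ ((H₀.cliqueFinset 3).card : ℝ) * (s : ℝ) ^ 3 := hb
      _ < (δ * (n₀ : ℝ) ^ 3) * (s : ℝ) ^ 3 := mul_lt_mul_of_pos_right htri hs3
      _ = δ * ((s * n₀ : ℕ) : ℝ) ^ 3 := by push_cast; ring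
  · -- edge removal
    intro E hE
    by_cases hn : n₀ ≤ 1
    · interval_cases n₀
      · simp
      · have hfree : (H₀.deleteEdges (↑(∅ : Finset (Sym2 V₀)))).CliqueFree 3 :=
          cliqueFree_of_card_lt (by rw [hcard]; norm_num)
        have hε : ε ≤ 0 := by
          have := hdel ∅ hfree
          simpa using this
        have h0 : (0 : ℝ) ≤ (E.card : ℝ) := Nat.cast_nonneg _
        push_cast
        nlinarith [sq_nonneg (s : ℝ)]
    · -- main case: n₀ ≥ 2
      have hn2 : 2 ≤ n₀ := by omega
      -- per-σ lower bound
      have hσbound : ∀ σ : V₀ → Fin s,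
          ε * (n₀ : ℝ) ^ 2 ≤ ((E.filter (matches' σ)).card : ℝ) := by
        intro σ
        have h1 := hdel _ (pullback_cliqueFree H₀ E hE σ)
        have h2 : ((E.filter (matches' σ)).image (Sym2.map Prod.fst)).card
            ≤ (E.filter (matches' σ)).card := Finset.card_image_le
        calc ε * (n₀ : ℝ) ^ 2 ≤ _ := h1
          _ ≤ ((E.filter (matches' σ)).card : ℝ) := by exact_mod_cast h2
      -- double counting
      have hswap : ∑ σ : V₀ → Fin s, (E.filter (matches' σ)).card
          = ∑ f ∈ E, ((univ : Finset (V₀ → Fin s)).filter (fun σ => matches' σ f)).card := by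
        simp_rw [Finset.card_filter]
        rw [Finset.sum_comm]
      have hupper : ∑ σ : V₀ → Fin s, (E.filter (matches' σ)).card
          ≤ E.card * s ^ (n₀ - 2) := by
        rw [hswap]
        calc _ ≤ ∑ _f ∈ E, s ^ (n₀ - 2) := Finset.sum_le_sum (fun f _ => by
              have := card_matches_le (s := s) f
              rwa [hcard] at this)
          _ = E.card * s ^ (n₀ - 2) := by rw [Finset.sum_const, smul_eq_mul]
      have hlow : ((s : ℝ) ^ n₀) * (ε * (n₀ : ℝ) ^ 2)
          ≤ ∑ σ : V₀ → Fin s, ((E.filter (matches' σ)).card : ℝ) := by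
        have := Finset.card_nsmul_le_sum (univ : Finset (V₀ → Fin s))
          (fun σ => ((E.filter (matches' σ)).card : ℝ)) (ε * (n₀ : ℝ) ^ 2)
          (fun σ _ => hσbound σ)
        rw [card_univ, Fintype.card_fun, Fintype.card_fin, hcard, nsmul_eq_mul] at this
        push_cast at this
        exact this
      have hhigh : (∑ σ : V₀ → Fin s, ((E.filter (matches' σ)).card : ℝ))
          ≤ (E.card : ℝ) * (s : ℝ) ^ (n₀ - 2) := by
        exact_mod_cast hupper
      have hle : ((s : ℝ) ^ n₀) * (ε * (n₀ : ℝ) ^ 2)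
          ≤ (E.card : ℝ) * (s : ℝ) ^ (n₀ - 2) := hlow.trans hhigh
      have hpow : (s : ℝ) ^ n₀ = (s : ℝ) ^ (n₀ - 2) * (s : ℝ) ^ 2 := by
        rw [← pow_add]; congr 1; omega
      have hpos : (0 : ℝ) < (s : ℝ) ^ (n₀ - 2) := by positivity
      push_cast
      apply le_of_mul_le_mul_right _ hpos
      calc ε * ((s : ℝ) * (n₀ : ℝ)) ^ 2 * (s : ℝ) ^ (n₀ - 2)
          = ((s : ℝ) ^ n₀) * (ε * (n₀ : ℝ) ^ 2) := by rw [hpow]; ring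
        _ ≤ (E.card : ℝ) * (s : ℝ) ^ (n₀ - 2) := hle
end

section
/- Let H be a bipartite graph with parts A and B, |A| = a, |B| = b, containing a vertex u ∈ B of degree 1. Suppose H is a subgraph of the graph obtained from the complete bipartite graph K_{a,b−1} by adding one pendant edge to a vertex of the first part. Then for every γ > 0 there is c > 0 such that in any n-vertex graph G with minimum degree at least γ·n, every edge of G lies in at least c·n^{a+b−2} copies of H (for all sufficiently large n). -/
open Finset SimpleGraph
open scoped Classical

/-- The complete bipartite graph `K_{a,b-1}` (parts `Fin a` and the first `b-1`
vertices of `Fin b`) together with one pendant edge attached to the vertex `0`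
of the first part (the pendant vertex being the last vertex of `Fin b`). -/
def pendantGraph (a b : ℕ) : SimpleGraph (Fin a ⊕ Fin b) :=
  SimpleGraph.fromRel (fun x y =>
    match x, y with
    | Sum.inl i, Sum.inr j => (j : ℕ) < b - 1 ∨ ((i : ℕ) = 0 ∧ (j : ℕ) = b - 1)
    | _, _ => False)


lemma card_le_pow_of_determined {α β : Type*} [Fintype α] [DecidableEq α] [Fintype β]
    [DecidableEq β] (D : Finset (α → β)) (R : Finset α)
    (h : ∀ f ∈ D, ∀ g ∈ D, (∀ z ∈ R, f z = g z) → f = g) :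
    D.card ≤ Fintype.card β ^ R.card := by
  have h1 : D.card ≤ (Fintype.piFinset (fun _ : ↥R => (univ : Finset β))).card := by
    apply Finset.card_le_card_of_injOn (fun f (z : ↥R) => f z.1)
    · intro f _; simp [Fintype.mem_piFinset]
    · intro f hf g hg hfg
      exact h f hf g hg (fun z hz => congrFun hfg ⟨z, hz⟩)
  simpa [Fintype.card_piFinset, Fintype.card_coe] using h1

lemma homCount {VH V : Type*} [Fintype VH] [DecidableEq VH] [Fintype V] [DecidableEq V]
    (G : SimpleGraph V) [DecidableRel G.Adj] (v w : V) (side : VH → Bool) (u u' : VH)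
    (hu : side u = false) (hu' : side u' = true) :
    (univ.filter fun f : VH → V => f u = w ∧ f u' = v ∧
        ∀ x y, side x = true → side y = false → y ≠ u → G.Adj (f x) (f y)).card
      = ∑ p : (↥(univ.filter fun x : VH => side x = true ∧ x ≠ u') → V),
          ((univ.filter fun z : V => G.Adj v z ∧
              ∀ x : ↥(univ.filter fun x : VH => side x = true ∧ x ≠ u'), G.Adj (p x) z).card)
            ^ (univ.filter fun y : VH => side y = false ∧ y ≠ u).card := by
  classical
  have huu' : u ≠ u' := by intro h; rw [h, hu'] at hu; simp at hu
  set A'F := univ.filter fun x : VH => side x = true ∧ x ≠ u' with hA'F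
  set B'F := univ.filter fun y : VH => side y = false ∧ y ≠ u with hB'F
  have memA : ∀ z : VH, z ∈ A'F ↔ (side z = true ∧ z ≠ u') := by
    intro z; rw [hA'F, mem_filter]; simp
  have memB : ∀ z : VH, z ∈ B'F ↔ (side z = false ∧ z ≠ u) := by
    intro z; rw [hB'F, mem_filter]; simp
  set S : (↥A'F → V) → Finset V := fun p =>
    univ.filter fun z : V => G.Adj v z ∧ ∀ x : ↥A'F, G.Adj (p x) z with hS
  have key : (univ.filter fun f : VH → V => f u = w ∧ f u' = v ∧
        ∀ x y, side x = true → side y = false → y ≠ u → G.Adj (f x) (f y)).card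
      = ((univ : Finset (↥A'F → V)).sigma
          (fun p => Fintype.piFinset (fun _ : ↥B'F => S p))).card := by
    apply Finset.card_nbij'
      (i := fun f => ⟨fun x => f x.1, fun y => f y.1⟩)
      (j := fun pq z =>
        if h0 : z = u then w else if h1 : z = u' then v
        else if h2 : side z = true then pq.1 ⟨z, (memA z).mpr ⟨h2, h1⟩⟩
        else pq.2 ⟨z, (memB z).mpr ⟨by simpa using h2, h0⟩⟩)
    · intro f hf
      simp only [Finset.mem_coe, mem_filter, mem_univ, true_and] at hf
      obtain ⟨h1, h2, h3⟩ := hf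
      simp only [Finset.mem_coe, Finset.mem_sigma, mem_univ, Fintype.mem_piFinset, true_and]
      intro y
      have hy := (memB y.1).mp y.2
      rw [hS]
      simp only [mem_filter, mem_univ, true_and]
      constructor
      · rw [← h2]; exact h3 u' y.1 hu' hy.1 hy.2
      · intro x
        exact h3 x.1 y.1 ((memA x.1).mp x.2).1 hy.1 hy.2
    · rintro ⟨p, q⟩ hpq
      simp only [Finset.mem_coe, Finset.mem_sigma, mem_univ, Fintype.mem_piFinset, true_and] at hpq
      simp only [Finset.mem_coe, mem_filter, mem_univ, true_and]
      refine ⟨by simp, by rw [dif_neg (Ne.symm huu')]; simp, ?_⟩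
      intro x y hx hy hyu
      have hyu' : y ≠ u' := by intro h; rw [h, hu'] at hy; simp at hy
      have hxu : x ≠ u := by intro h; rw [h, hu] at hx; simp at hx
      have hyS : q ⟨y, (memB y).mpr ⟨hy, hyu⟩⟩ ∈ S p := hpq _
      rw [hS] at hyS
      simp only [mem_filter, mem_univ, true_and] at hyS
      have hyval : (if h0 : y = u then w else if h1 : y = u' then v
          else if h2 : side y = true then p ⟨y, (memA y).mpr ⟨h2, h1⟩⟩
          else q ⟨y, (memB y).mpr ⟨by simpa using h2, h0⟩⟩)
          = q ⟨y, (memB y).mpr ⟨hy, hyu⟩⟩ := by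
        rw [dif_neg hyu, dif_neg hyu', dif_neg (by simp [hy])]
      rw [hyval]
      by_cases hxu' : x = u'
      · subst hxu'; rw [dif_neg hxu, dif_pos rfl]; exact hyS.1
      · rw [dif_neg hxu, dif_neg hxu', dif_pos hx]; exact hyS.2 _
    · intro f hf
      simp only [Finset.mem_coe, mem_filter, mem_univ, true_and] at hf
      funext z
      beta_reduce
      by_cases h0 : z = u
      · subst h0; rw [dif_pos rfl, hf.1]
      by_cases h1 : z = u'
      · subst h1; rw [dif_neg h0, dif_pos rfl, hf.2.1]
      by_cases h2 : side z = true
      · rw [dif_neg h0, dif_neg h1, dif_pos h2]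
      · rw [dif_neg h0, dif_neg h1, dif_neg h2]
    · rintro ⟨p, q⟩ hpq
      have hfst : (fun (x : ↥A'F) =>
          (if h0 : x.1 = u then w else if h1 : x.1 = u' then v
            else if h2 : side x.1 = true then p ⟨x.1, (memA x.1).mpr ⟨h2, h1⟩⟩
            else q ⟨x.1, (memB x.1).mpr ⟨by simpa using h2, h0⟩⟩)) = p := by
        funext x
        have hx := (memA x.1).mp x.2
        have hxu : x.1 ≠ u := by intro h; rw [h, hu] at hx; simp at hx
        rw [dif_neg hxu, dif_neg hx.2, dif_pos hx.1]
      have hsnd : (fun (y : ↥B'F) =>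
          (if h0 : y.1 = u then w else if h1 : y.1 = u' then v
            else if h2 : side y.1 = true then p ⟨y.1, (memA y.1).mpr ⟨h2, h1⟩⟩
            else q ⟨y.1, (memB y.1).mpr ⟨by simpa using h2, h0⟩⟩)) = q := by
        funext y
        have hy := (memB y.1).mp y.2
        have hyu' : y.1 ≠ u' := by intro h; rw [h, hu'] at hy; simp at hy
        have : (⟨y.1, (memB y.1).mpr ⟨hy.1, hy.2⟩⟩ : ↥B'F) = y := Subtype.ext rfl
        rw [dif_neg hy.2, dif_neg hyu', dif_neg (by simp [hy.1])]
      exact Sigma.ext hfst (heq_of_eq hsnd)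
  rw [key, Finset.card_sigma]
  apply Finset.sum_congr rfl
  intro p _
  rw [Fintype.card_piFinset, Finset.prod_const, Finset.card_univ, Fintype.card_coe]

-- the counting core, for a fixed graph
lemma main_count {VH V : Type*} [Fintype VH] [DecidableEq VH] [Fintype V] [DecidableEq V]
    (G : SimpleGraph V) [DecidableRel G.Adj] (v w : V) (side : VH → Bool) (u u' : VH)
    (hu : side u = false) (hu' : side u' = true)
    (a b : ℕ) (ha : 1 ≤ a) (hb : 2 ≤ b) (hcard : Fintype.card VH = a + b)
    (hcA : (univ.filter fun x : VH => side x = true ∧ x ≠ u').card = a - 1)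
    (hcB : (univ.filter fun y : VH => side y = false ∧ y ≠ u).card = b - 1)
    (γ : ℝ) (hγ : 0 < γ) (hδ : ∀ z : V, γ * (Fintype.card V : ℝ) ≤ (G.degree z : ℝ))
    (hvw : v ≠ w) (hn1 : 1 ≤ Fintype.card V) :
    γ ^ (a * (b - 1)) * (Fintype.card V : ℝ) ^ (a + b - 2)
        - ((a + b) * (a + b) : ℝ) * (Fintype.card V : ℝ) ^ (a + b - 3)
      ≤ ((univ.filter fun f : VH → V => (f u = w ∧ f u' = v ∧
          (∀ x y, side x = true → side y = false → y ≠ u → G.Adj (f x) (f y))) ∧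
          Function.Injective f).card : ℝ) := by
  classical
  set n := Fintype.card V with hn
  have hn0 : (0 : ℝ) < n := by exact_mod_cast hn1
  have huu' : u ≠ u' := by intro h; rw [h, hu'] at hu; simp at hu
  set A'F := univ.filter fun x : VH => side x = true ∧ x ≠ u' with hA'F
  set B'F := univ.filter fun y : VH => side y = false ∧ y ≠ u with hB'F
  set Hom' := univ.filter fun f : VH → V => f u = w ∧ f u' = v ∧
      ∀ x y, side x = true → side y = false → y ≠ u → G.Adj (f x) (f y) with hHom'
  set Inj' := univ.filter fun f : VH → V => (f u = w ∧ f u' = v ∧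
      (∀ x y, side x = true → side y = false → y ≠ u → G.Adj (f x) (f y))) ∧
      Function.Injective f with hInj'
  set Bad := univ.filter fun f : VH → V => f u = w ∧ f u' = v ∧ ¬ Function.Injective f
    with hBad
  -- splitting
  have hsplit : Hom'.card ≤ Inj'.card + Bad.card := by
    have hsub : Hom' ⊆ Inj' ∪ Bad := by
      intro f hf
      rw [hHom', mem_filter] at hf
      rw [Finset.mem_union, hInj', hBad, mem_filter, mem_filter]
      by_cases hI : Function.Injective f
      · exact Or.inl ⟨by simp, ⟨hf.2, hI⟩⟩
      · exact Or.inr ⟨by simp, hf.2.1, hf.2.2.1, hI⟩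
    exact le_trans (Finset.card_le_card hsub) (Finset.card_union_le _ _)
  -- bad bound
  have hbadpair : ∀ xy : VH × VH, xy ∈ (univ : Finset VH).offDiag →
      (univ.filter fun f : VH → V => f u = w ∧ f u' = v ∧ f xy.1 = f xy.2).card
        ≤ n ^ (a + b - 3) := by
    rintro ⟨x, y⟩ hxy
    rw [Finset.mem_offDiag] at hxy
    have hxyne : x ≠ y := hxy.2.2
    by_cases hyy : y = u ∨ y = u'
    · by_cases hx : x = u ∨ x = u'
      · -- impossible: f x = f y would give v = w
        have : (univ.filter fun f : VH → V => f u = w ∧ f u' = v ∧ f x = f y) = ∅ := by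
          rw [Finset.filter_eq_empty_iff]
          rintro f - ⟨h1, h2, h3⟩
          rcases hx with rfl | rfl <;> rcases hyy with rfl | rfl
          · exact hxyne rfl
          · rw [h1, h2] at h3; exact hvw h3.symm
          · rw [h1, h2] at h3; exact hvw h3
          · exact hxyne rfl
        rw [this]; positivity
      · push_neg at hx
        have hcR : ((univ : Finset VH) \ {u, u', x}).card = a + b - 3 := by
          rw [Finset.card_sdiff_of_subset (Finset.subset_univ _), Finset.card_univ, hcard]
          congr 1
          rw [Finset.card_insert_of_notMem (by simp [huu', Ne.symm hx.1]),
            Finset.card_insert_of_notMem (by simp [Ne.symm hx.2]), Finset.card_singleton]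
        calc (univ.filter fun f : VH → V => f u = w ∧ f u' = v ∧ f x = f y).card
            ≤ Fintype.card V ^ ((univ : Finset VH) \ {u, u', x}).card := by
              apply card_le_pow_of_determined
              intro f hf g hg hagree
              rw [mem_filter] at hf hg
              obtain ⟨-, hf1, hf2, hf3⟩ := hf
              obtain ⟨-, hg1, hg2, hg3⟩ := hg
              funext z
              by_cases hz : z ∈ (univ : Finset VH) \ {u, u', x}
              · exact hagree z hz
              · simp only [Finset.mem_sdiff, Finset.mem_univ, true_and,
                  Finset.mem_insert, Finset.mem_singleton, not_not] at hz
                rcases hz with rfl | rfl | rfl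
                · rw [hf1, hg1]
                · rw [hf2, hg2]
                · rw [hf3, hg3]
                  rcases hyy with rfl | rfl
                  · rw [hf1, hg1]
                  · rw [hf2, hg2]
          _ = n ^ (a + b - 3) := by rw [hcR, hn]
    · push_neg at hyy
      have hcR : ((univ : Finset VH) \ {u, u', y}).card = a + b - 3 := by
        rw [Finset.card_sdiff_of_subset (Finset.subset_univ _), Finset.card_univ, hcard]
        congr 1
        rw [Finset.card_insert_of_notMem (by simp [huu', Ne.symm hyy.1]),
          Finset.card_insert_of_notMem (by simp [Ne.symm hyy.2]), Finset.card_singleton]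
      calc (univ.filter fun f : VH → V => f u = w ∧ f u' = v ∧ f x = f y).card
          ≤ Fintype.card V ^ ((univ : Finset VH) \ {u, u', y}).card := by
            apply card_le_pow_of_determined
            intro f hf g hg hagree
            rw [mem_filter] at hf hg
            obtain ⟨-, hf1, hf2, hf3⟩ := hf
            obtain ⟨-, hg1, hg2, hg3⟩ := hg
            have hxval : f x = g x := by
              by_cases hxu : x = u
              · subst hxu; rw [hf1, hg1]
              by_cases hxu' : x = u'
              · subst hxu'; rw [hf2, hg2]
              · exact hagree x (by simp [hxu, hxu', hxyne])
            funext z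
            by_cases hz : z ∈ (univ : Finset VH) \ {u, u', y}
            · exact hagree z hz
            · simp only [Finset.mem_sdiff, Finset.mem_univ, true_and,
                Finset.mem_insert, Finset.mem_singleton, not_not] at hz
              rcases hz with rfl | rfl | rfl
              · rw [hf1, hg1]
              · rw [hf2, hg2]
              · rw [← hf3, ← hg3, hxval]
        _ = n ^ (a + b - 3) := by rw [hcR, hn]
  have hbadcard : (Bad.card : ℝ) ≤ ((a + b) * (a + b) : ℝ) * (n : ℝ) ^ (a + b - 3) := by
    have hsub : Bad ⊆ (univ : Finset VH).offDiag.biUnion (fun xy =>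
        univ.filter fun f : VH → V => f u = w ∧ f u' = v ∧ f xy.1 = f xy.2) := by
      intro f hf
      rw [hBad, mem_filter] at hf
      obtain ⟨-, h1, h2, h3⟩ := hf
      rw [Function.not_injective_iff] at h3
      obtain ⟨x, y, hfxy, hxy⟩ := h3
      rw [Finset.mem_biUnion]
      exact ⟨(x, y), by simp [Finset.mem_offDiag, hxy], by simp [h1, h2, hfxy]⟩
    have h1 : Bad.card ≤ ((a+b)*(a+b)) * n ^ (a + b - 3) := by
      calc Bad.card ≤ ∑ xy ∈ (univ : Finset VH).offDiag,
            (univ.filter fun f : VH → V => f u = w ∧ f u' = v ∧ f xy.1 = f xy.2).card :=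
          le_trans (Finset.card_le_card hsub) (Finset.card_biUnion_le)
        _ ≤ ∑ _xy ∈ (univ : Finset VH).offDiag, n ^ (a + b - 3) :=
          Finset.sum_le_sum hbadpair
        _ = (univ : Finset VH).offDiag.card * n ^ (a + b - 3) := by
          rw [Finset.sum_const, smul_eq_mul]
        _ ≤ ((a+b)*(a+b)) * n ^ (a + b - 3) := by
          apply Nat.mul_le_mul_right
          rw [Finset.offDiag_card, Finset.card_univ, hcard]
          omega
    calc (Bad.card : ℝ) ≤ (((a+b)*(a+b)) * n ^ (a + b - 3) : ℕ) := by exact_mod_cast h1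
      _ = ((a + b) * (a + b) : ℝ) * (n : ℝ) ^ (a + b - 3) := by push_cast; ring
  -- lower bound on Hom'
  set S : (↥A'F → V) → Finset V := fun p =>
    univ.filter fun z : V => G.Adj v z ∧ ∀ x : ↥A'F, G.Adj (p x) z with hS
  have hhom : Hom'.card = ∑ p : (↥A'F → V), (S p).card ^ (b - 1) := by
    rw [hHom', homCount G v w side u u' hu hu']
    rw [← hcB]
  have hsumS : ((γ * n) ^ a : ℝ) ≤ ∑ p : (↥A'F → V), ((S p).card : ℝ) := by
    have hswap : ∑ p : (↥A'F → V), (S p).card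
        = ∑ z ∈ G.neighborFinset v, (G.degree z) ^ (a - 1) := by
      have e1 : ∀ p : (↥A'F → V), (S p).card
          = ∑ z : V, if G.Adj v z ∧ ∀ x : ↥A'F, G.Adj (p x) z then 1 else 0 := by
        intro p; rw [hS]; rw [Finset.card_filter]
      rw [Finset.sum_congr rfl (fun p _ => e1 p), Finset.sum_comm]
      rw [← Finset.sum_filter_add_sum_filter_not univ (fun z => G.Adj v z)]
      have e2 : ∀ z ∈ univ.filter (fun z => ¬ G.Adj v z),
          (∑ p : (↥A'F → V), if G.Adj v z ∧ ∀ x : ↥A'F, G.Adj (p x) z then 1 else 0) = 0 := by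
        intro z hz
        rw [mem_filter] at hz
        apply Finset.sum_eq_zero
        intro p _
        simp [hz.2]
      rw [Finset.sum_congr rfl e2, Finset.sum_const, smul_zero, add_zero]
      have e3 : univ.filter (fun z => G.Adj v z) = G.neighborFinset v := by
        ext z; simp [SimpleGraph.mem_neighborFinset]
      rw [e3]
      apply Finset.sum_congr rfl
      intro z hz
      rw [SimpleGraph.mem_neighborFinset] at hz
      have e4 : (∑ p : (↥A'F → V), if G.Adj v z ∧ ∀ x : ↥A'F, G.Adj (p x) z then 1 else 0)
          = (univ.filter fun p : (↥A'F → V) => ∀ x : ↥A'F, G.Adj (p x) z).card := by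
        rw [Finset.card_filter]
        apply Finset.sum_congr rfl
        intro p _
        simp [hz]
      rw [e4]
      have e5 : (univ.filter fun p : (↥A'F → V) => ∀ x : ↥A'F, G.Adj (p x) z)
          = Fintype.piFinset (fun _ : ↥A'F => G.neighborFinset z) := by
        ext p
        simp [Fintype.mem_piFinset, SimpleGraph.mem_neighborFinset, SimpleGraph.adj_comm]
      rw [e5, Fintype.card_piFinset, Finset.prod_const, Finset.card_univ, Fintype.card_coe,
        SimpleGraph.card_neighborFinset_eq_degree, hcA]
    have hlow : ∀ z ∈ G.neighborFinset v, ((γ * n) ^ (a-1) : ℝ) ≤ ((G.degree z : ℕ) : ℝ) ^ (a-1) :=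
      fun z _ => pow_le_pow_left₀ (by positivity) (hδ z) _
    have hdv : γ * n ≤ ((G.degree v : ℕ) : ℝ) := hδ v
    have hcNv : ((G.neighborFinset v).card : ℝ) = ((G.degree v : ℕ) : ℝ) := by
      rw [SimpleGraph.card_neighborFinset_eq_degree]
    calc ((γ * n) ^ a : ℝ) = (γ * n) * (γ * n) ^ (a - 1) := by
          rw [← pow_succ']
          congr 1
          omega
      _ ≤ ((G.degree v : ℕ) : ℝ) * (γ * n) ^ (a - 1) := by
          apply mul_le_mul_of_nonneg_right hdv (by positivity)
      _ = ∑ _z ∈ G.neighborFinset v, ((γ * n) ^ (a - 1) : ℝ) := by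
          rw [Finset.sum_const, nsmul_eq_mul, hcNv]
      _ ≤ ∑ z ∈ G.neighborFinset v, ((G.degree z : ℕ) : ℝ) ^ (a - 1) :=
          Finset.sum_le_sum hlow
      _ = ∑ p : (↥A'F → V), ((S p).card : ℝ) := by
          exact_mod_cast hswap.symm
  have hcardP : (Fintype.card (↥A'F → V) : ℝ) = (n : ℝ) ^ (a - 1) := by
    rw [Fintype.card_fun, Fintype.card_coe, hcA, hn]
    push_cast
    ring
  have hjensen := pow_sum_div_card_le_sum_pow (s := (univ : Finset (↥A'F → V)))
      (f := fun p => ((S p).card : ℝ)) (fun i _ => by positivity) (b - 2)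
  have hb21 : b - 2 + 1 = b - 1 := by omega
  rw [hb21] at hjensen
  have hhomR : (γ ^ (a * (b-1)) * (n : ℝ) ^ (a + b - 2)) ≤ (Hom'.card : ℝ) := by
    have hcast : (Hom'.card : ℝ) = ∑ p : (↥A'F → V), ((S p).card : ℝ) ^ (b - 1) := by
      rw [hhom]; push_cast; ring
    rw [hcast]
    have hnum : (((γ * n) ^ a) ^ (b - 1) : ℝ)
        ≤ (∑ p : (↥A'F → V), ((S p).card : ℝ)) ^ (b - 1) :=
      pow_le_pow_left₀ (by positivity) hsumS _
    have hden : (0 : ℝ) < ((n : ℝ) ^ (a - 1)) ^ (b - 2) := by positivity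
    have hscard : ((univ : Finset (↥A'F → V)).card : ℝ) = (n : ℝ) ^ (a - 1) := by
      rw [Finset.card_univ]; exact hcardP
    rw [hscard] at hjensen
    have key : (((γ * n) ^ a) ^ (b - 1) : ℝ) / ((n : ℝ) ^ (a - 1)) ^ (b - 2)
        ≤ ∑ p : (↥A'F → V), ((S p).card : ℝ) ^ (b - 1) :=
      le_trans (div_le_div_of_nonneg_right hnum hden.le) hjensen
    refine le_trans (le_of_eq ?_) key
    have hexp : (a - 1) * (b - 2) + (a + b - 2) = a * (b - 1) := by
      obtain ⟨a', rfl⟩ := Nat.exists_eq_add_of_le ha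
      obtain ⟨b', rfl⟩ := Nat.exists_eq_add_of_le hb
      have e1 : 1 + a' - 1 = a' := by omega
      have e2 : 2 + b' - 2 = b' := by omega
      have e3 : 1 + a' + (2 + b') - 2 = a' + b' + 1 := by omega
      have e4 : 2 + b' - 1 = b' + 1 := by omega
      rw [e1, e2, e3, e4]
      ring
    have hexp' : (a + b - 2) + (a - 1) * (b - 2) = a * (b - 1) := by
      rw [Nat.add_comm]; exact hexp
    have hden' : (((n:ℝ) ^ (a - 1)) ^ (b - 2)) = (n:ℝ) ^ ((a-1)*(b-2)) := by
      rw [← pow_mul]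
    rw [hden'] at hden ⊢
    rw [eq_div_iff (ne_of_gt hden)]
    rw [mul_assoc, ← pow_add, hexp', ← mul_pow, pow_mul]
  -- combine
  have hfinal : (Hom'.card : ℝ) - (Bad.card : ℝ) ≤ (Inj'.card : ℝ) := by
    have : (Hom'.card : ℝ) ≤ (Inj'.card : ℝ) + (Bad.card : ℝ) := by exact_mod_cast hsplit
    linarith
  calc γ ^ (a * (b - 1)) * (n : ℝ) ^ (a + b - 2) - ((a+b) * (a+b) : ℝ) * (n:ℝ) ^ (a + b - 3)
      ≤ (Hom'.card : ℝ) - (Bad.card : ℝ) := by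
        have := hbadcard
        linarith [hhomR]
    _ ≤ (Inj'.card : ℝ) := hfinal

theorem pendant_bipartite_popular_edges {VH : Type*} [Fintype VH] [DecidableEq VH]
    (H : SimpleGraph VH) [DecidableRel H.Adj]
    (a b : ℕ) (ha : 1 ≤ a) (hb : 2 ≤ b) (hcard : Fintype.card VH = a + b)
    (side : VH → Bool) (hbip : ∀ x y, H.Adj x y → side x ≠ side y)
    (hA : (univ.filter fun x => side x = true).card = a)
    (hB : (univ.filter fun x => side x = false).card = b)
    (hiso : ∀ x : VH, 0 < H.degree x)
    (u : VH) (hu : side u = false) (hdu : H.degree u = 1)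
    (hemb : ∃ e : VH → Fin a ⊕ Fin b, Function.Injective e ∧
      ∀ x y, H.Adj x y → (pendantGraph a b).Adj (e x) (e y)) :
    ∀ γ : ℝ, 0 < γ → ∃ c : ℝ, 0 < c ∧ ∃ n₀ : ℕ, ∀ n : ℕ, n₀ ≤ n →
      ∀ (V : Type) [Fintype V] [DecidableEq V] (G : SimpleGraph V) [DecidableRel G.Adj],
        Fintype.card V = n → γ * n ≤ G.minDegree →
        ∀ v w : V, G.Adj v w →
          c * (n : ℝ) ^ (a + b - 2) ≤
            (((univ : Finset (VH → V)).filter fun f =>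
              Function.Injective f ∧ (∀ x y, H.Adj x y → G.Adj (f x) (f y)) ∧
                ∃ x y, H.Adj x y ∧ f x = v ∧ f y = w).card : ℝ) := by
  classical
  intro γ hγ
  have hdeg1 : (H.neighborFinset u).card = 1 := hdu
  obtain ⟨u', hNu⟩ := Finset.card_eq_one.mp hdeg1
  have hadj : H.Adj u u' := by
    rw [← SimpleGraph.mem_neighborFinset, hNu]; exact Finset.mem_singleton_self u'
  have huniq : ∀ x, H.Adj x u → x = u' := by
    intro x hx
    have hx2 : x ∈ H.neighborFinset u := by
      rw [SimpleGraph.mem_neighborFinset]; exact hx.symm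
    rw [hNu, Finset.mem_singleton] at hx2; exact hx2
  have hu' : side u' = true := by
    have h := hbip u u' hadj
    rw [hu] at h
    cases hc : side u'
    · exact absurd hc (Ne.symm h)
    · rfl
  have hcA : (univ.filter fun x : VH => side x = true ∧ x ≠ u').card = a - 1 := by
    have e : (univ.filter fun x : VH => side x = true ∧ x ≠ u')
        = (univ.filter fun x : VH => side x = true).erase u' := by
      ext z
      simp only [mem_filter, Finset.mem_erase, Finset.mem_univ, true_and]
      tauto
    rw [e, Finset.card_erase_of_mem (by simp [hu']), hA]
  have hcB : (univ.filter fun y : VH => side y = false ∧ y ≠ u).card = b - 1 := by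
    have e : (univ.filter fun y : VH => side y = false ∧ y ≠ u)
        = (univ.filter fun y : VH => side y = false).erase u := by
      ext z
      simp only [mem_filter, Finset.mem_erase, Finset.mem_univ, true_and]
      tauto
    rw [e, Finset.card_erase_of_mem (by simp [hu]), hB]
  refine ⟨γ ^ (a * (b - 1)) / 2, by positivity,
    max 1 (⌈(2 * ((a + b : ℕ) : ℝ) * ((a + b : ℕ) : ℝ)) / γ ^ (a * (b - 1))⌉₊ + 1), ?_⟩
  intro n hn V _ _ G _ hnV hδ v w hvw
  have hn1 : 1 ≤ n := le_trans (le_max_left _ _) hn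
  have hdegz : ∀ z : V, γ * (Fintype.card V : ℝ) ≤ (G.degree z : ℝ) := by
    intro z
    rw [hnV]
    exact le_trans hδ (by exact_mod_cast G.minDegree_le_degree z)
  have hmc := main_count G v w side u u' hu hu' a b ha hb hcard hcA hcB γ hγ hdegz
    hvw.ne (by rw [hnV]; exact hn1)
  rw [hnV] at hmc
  have hsub : (univ.filter fun f : VH → V => (f u = w ∧ f u' = v ∧
        (∀ x y, side x = true → side y = false → y ≠ u → G.Adj (f x) (f y))) ∧
        Function.Injective f)
      ⊆ (univ : Finset (VH → V)).filter fun f =>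
          Function.Injective f ∧ (∀ x y, H.Adj x y → G.Adj (f x) (f y)) ∧
            ∃ x y, H.Adj x y ∧ f x = v ∧ f y = w := by
    intro f hf
    rw [mem_filter] at hf ⊢
    obtain ⟨-, ⟨h1, h2, h3⟩, hI⟩ := hf
    refine ⟨Finset.mem_univ f, hI, ?_, u', u, hadj.symm, h2, h1⟩
    intro x y hxy
    have hside := hbip x y hxy
    by_cases hsx : side x = true
    · have hsy : side y = false := by cases hsy : side y <;> simp_all
      by_cases hyu : y = u
      · subst hyu
        have hxu' := huniq x hxy
        subst hxu'
        rw [h1, h2]; exact hvw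
      · exact h3 x y hsx hsy hyu
    · have hsx' : side x = false := by cases hc : side x <;> simp_all
      have hsy : side y = true := by cases hsy : side y <;> simp_all
      by_cases hxu : x = u
      · subst hxu
        have hyu' := huniq y hxy.symm
        subst hyu'
        rw [h1, h2]; exact hvw.symm
      · exact (h3 y x hsy hsx' hxu).symm
  have hle : ((univ.filter fun f : VH → V => (f u = w ∧ f u' = v ∧
        (∀ x y, side x = true → side y = false → y ≠ u → G.Adj (f x) (f y))) ∧
        Function.Injective f).card : ℝ)
      ≤ (((univ : Finset (VH → V)).filter fun f =>
          Function.Injective f ∧ (∀ x y, H.Adj x y → G.Adj (f x) (f y)) ∧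
            ∃ x y, H.Adj x y ∧ f x = v ∧ f y = w).card : ℝ) := by
    exact_mod_cast Finset.card_le_card hsub
  -- numeric part
  have hKpos : (0 : ℝ) < γ ^ (a * (b - 1)) := by positivity
  have hX : (2 * ((a + b : ℕ) : ℝ) * ((a + b : ℕ) : ℝ)) / γ ^ (a * (b - 1)) ≤ (n : ℝ) := by
    have h2 : (⌈(2 * ((a + b : ℕ) : ℝ) * ((a + b : ℕ) : ℝ)) / γ ^ (a * (b - 1))⌉₊ + 1 : ℕ) ≤ n :=
      le_trans (le_max_right _ _) hn
    calc (2 * ((a + b : ℕ) : ℝ) * ((a + b : ℕ) : ℝ)) / γ ^ (a * (b - 1))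
        ≤ (⌈(2 * ((a + b : ℕ) : ℝ) * ((a + b : ℕ) : ℝ)) / γ ^ (a * (b - 1))⌉₊ : ℝ) := Nat.le_ceil _
      _ ≤ ((⌈(2 * ((a + b : ℕ) : ℝ) * ((a + b : ℕ) : ℝ)) / γ ^ (a * (b - 1))⌉₊ + 1 : ℕ) : ℝ) := by
          push_cast; linarith
      _ ≤ (n : ℝ) := by exact_mod_cast h2
  have h2ab : ((a + b : ℕ) : ℝ) * ((a + b : ℕ) : ℝ) ≤ γ ^ (a * (b - 1)) / 2 * (n : ℝ) := by
    rw [div_le_iff₀ hKpos] at hX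
    nlinarith
  have hexp2 : a + b - 2 = (a + b - 3) + 1 := by omega
  have hbound : ((a + b : ℕ) : ℝ) * ((a + b : ℕ) : ℝ) * (n : ℝ) ^ (a + b - 3)
      ≤ γ ^ (a * (b - 1)) / 2 * (n : ℝ) ^ (a + b - 2) := by
    rw [hexp2, pow_succ]
    calc ((a + b : ℕ) : ℝ) * ((a + b : ℕ) : ℝ) * (n : ℝ) ^ (a + b - 3)
        ≤ (γ ^ (a * (b - 1)) / 2 * (n : ℝ)) * (n : ℝ) ^ (a + b - 3) :=
          mul_le_mul_of_nonneg_right h2ab (by positivity)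
      _ = γ ^ (a * (b - 1)) / 2 * ((n : ℝ) ^ (a + b - 3) * (n : ℝ)) := by ring
  have hsplitγ : γ ^ (a * (b - 1)) / 2 * (n : ℝ) ^ (a + b - 2)
      ≤ γ ^ (a * (b - 1)) * (n : ℝ) ^ (a + b - 2)
        - ((a + b : ℕ) : ℝ) * ((a + b : ℕ) : ℝ) * (n : ℝ) ^ (a + b - 3) := by
    have h2 : γ ^ (a * (b - 1)) * (n : ℝ) ^ (a + b - 2)
        = 2 * (γ ^ (a * (b - 1)) / 2 * (n : ℝ) ^ (a + b - 2)) := by ring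
    linarith only [hbound, h2]
  have hcast : (((a : ℝ) + b) * ((a : ℝ) + b)) = ((a + b : ℕ) : ℝ) * ((a + b : ℕ) : ℝ) := by
    push_cast; ring
  calc γ ^ (a * (b - 1)) / 2 * (n : ℝ) ^ (a + b - 2)
      ≤ γ ^ (a * (b - 1)) * (n : ℝ) ^ (a + b - 2)
        - ((a + b : ℕ) : ℝ) * ((a + b : ℕ) : ℝ) * (n : ℝ) ^ (a + b - 3) := hsplitγ
    _ ≤ ((univ.filter fun f : VH → V => (f u = w ∧ f u' = v ∧
          (∀ x y, side x = true → side y = false → y ≠ u → G.Adj (f x) (f y))) ∧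
          Function.Injective f).card : ℝ) := by
        rw [hcast] at hmc
        exact hmc
    _ ≤ _ := hle
end

section
/- Let r ≥ 3, s ≥ 2, and let G be the Turán graph T(n, r−1) with parts S₁,...,S_{r−1} of equal size n/(r−1), modified by placing an arbitrary graph inside S₁ in which every vertex has degree at most 2p·n/(r−1) for some p ∈ (0, 1/(4s²)). Then G has minimum degree at least ((r−2)/(r−1))·n, and every copy of the complete multipartite graph K_r[s] in G contains a copy of K_{s,s} inside S₁. -/
open Finset SimpleGraph
open scoped Classical

theorem turan_modified_Kss {r s m : ℕ} (hr : 3 ≤ r) (hs : 2 ≤ s)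
    (p : ℝ) (hp : 0 < p) (hp2 : p < 1 / (4 * (s : ℝ) ^ 2))
    (G : SimpleGraph (Fin (r - 1) × Fin m)) [DecidableRel G.Adj]
    (hcross : ∀ u v : Fin (r - 1) × Fin m, u.1 ≠ v.1 → G.Adj u v)
    (hin : ∀ u v : Fin (r - 1) × Fin m, G.Adj u v → u.1 = v.1 →
      ((u.1 : ℕ) = 0 ∧ (v.1 : ℕ) = 0))
    (hdeg : ∀ v : Fin (r - 1) × Fin m, (v.1 : ℕ) = 0 →
      (((univ.filter fun w : Fin (r - 1) × Fin m =>
          (w.1 : ℕ) = 0 ∧ G.Adj v w).card : ℝ) ≤ 2 * p * m)) :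
    (((r : ℝ) - 2) / ((r : ℝ) - 1) * ((r - 1 : ℕ) * m : ℕ) ≤ G.minDegree) ∧
    ∀ f : Fin r × Fin s → Fin (r - 1) × Fin m, Function.Injective f →
      (∀ x y : Fin r × Fin s, x.1 ≠ y.1 → G.Adj (f x) (f y)) →
      ∃ X Y : Finset (Fin (r - 1) × Fin m),
        X.card = s ∧ Y.card = s ∧ Disjoint X Y ∧
        (∀ x ∈ X, (x.1 : ℕ) = 0 ∧ x ∈ univ.image f) ∧
        (∀ y ∈ Y, (y.1 : ℕ) = 0 ∧ y ∈ univ.image f) ∧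
        ∀ x ∈ X, ∀ y ∈ Y, G.Adj x y := by
  have hr1 : 2 ≤ r - 1 := by omega
  have hr3 : (3 : ℝ) ≤ (r : ℝ) := by exact_mod_cast hr
  constructor
  · -- minimum degree bound
    rcases Nat.eq_zero_or_pos m with hm | hm
    · subst hm
      simp
    · have hne : Nonempty (Fin (r - 1) × Fin m) := ⟨⟨⟨0, by omega⟩, ⟨0, hm⟩⟩⟩
      have hdeg' : ∀ v : Fin (r - 1) × Fin m, (r - 2) * m ≤ G.degree v := by
        intro v
        have hsub : (univ.filter fun w : Fin (r - 1) × Fin m => w.1 ≠ v.1)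
            ⊆ G.neighborFinset v := by
          intro w hw
          simp only [mem_filter, mem_univ, true_and] at hw
          rw [mem_neighborFinset]
          exact hcross v w fun h => hw h.symm
        have hcard : (univ.filter fun w : Fin (r - 1) × Fin m => w.1 ≠ v.1).card
            = (r - 2) * m := by
          have heq : (univ.filter fun w : Fin (r - 1) × Fin m => w.1 ≠ v.1)
              = (univ.erase v.1) ×ˢ (univ : Finset (Fin m)) := by
            ext ⟨a, b⟩
            simp [mem_erase, and_comm]
          have hm2 : r - 1 - 1 = r - 2 := by omega
          rw [heq, card_product, card_erase_of_mem (mem_univ _), card_univ, card_univ,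
            Fintype.card_fin, Fintype.card_fin, hm2]
        have : (r - 2) * m ≤ (G.neighborFinset v).card := hcard ▸ card_le_card hsub
        rw [← G.card_neighborFinset_eq_degree v]
        exact this
      have hmin : (r - 2) * m ≤ G.minDegree :=
        G.le_minDegree_of_forall_le_degree _ hdeg'
      have hc1 : ((r - 1 : ℕ) : ℝ) = (r : ℝ) - 1 := by
        push_cast [Nat.cast_sub (by omega : 1 ≤ r)]; ring
      have hc2 : ((r - 2 : ℕ) : ℝ) = (r : ℝ) - 2 := by
        push_cast [Nat.cast_sub (by omega : 2 ≤ r)]; ring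
      have hrne : (r : ℝ) - 1 ≠ 0 := by linarith
      have heq : ((r : ℝ) - 2) / ((r : ℝ) - 1) * (((r - 1 : ℕ) * m : ℕ) : ℝ)
          = (((r - 2) * m : ℕ) : ℝ) := by
        push_cast [hc1, hc2]
        field_simp
      rw [heq]
      exact_mod_cast hmin
  · intro f hf hadj
    -- a class i is "good" if all its vertices land in part 0
    classical
    set good : Fin r → Prop := fun i => ∀ j : Fin s, ((f (i, j)).1 : ℕ) = 0 with hgooddef
    have hsne : Nonempty (Fin s) := ⟨⟨0, by omega⟩⟩
    -- witness of badness
    let wit : Fin r → Fin s := fun i =>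
      if h : ∃ j : Fin s, ((f (i, j)).1 : ℕ) ≠ 0 then h.choose else Classical.arbitrary _
    have hwit : ∀ i : Fin r, ¬ good i → ((f (i, wit i)).1 : ℕ) ≠ 0 := by
      intro i hi
      have h : ∃ j : Fin s, ((f (i, j)).1 : ℕ) ≠ 0 := by
        by_contra hcon
        push_neg at hcon
        exact hi hcon
      simpa [wit, h] using h.choose_spec
    -- each nonzero part hosts at most one bad class
    have hbadcard : (univ.filter fun i : Fin r => ¬ good i).card ≤ r - 2 := by
      have hmap : ∀ i ∈ univ.filter fun i : Fin r => ¬ good i,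
          (f (i, wit i)).1 ∈ univ.filter fun j : Fin (r - 1) => (j : ℕ) ≠ 0 := by
        intro i hi
        simp only [mem_filter, mem_univ, true_and] at hi ⊢
        exact hwit i hi
      have hinj : Set.InjOn (fun i => (f (i, wit i)).1)
          (univ.filter fun i : Fin r => ¬ good i) := by
        intro i₁ h₁ i₂ h₂ heq
        simp only [coe_filter, Set.mem_setOf_eq, mem_univ, true_and] at h₁ h₂
        by_contra hne
        have hadj' : G.Adj (f (i₁, wit i₁)) (f (i₂, wit i₂)) := hadj _ _ hne
        have := (hin _ _ hadj' heq).1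
        exact hwit i₁ h₁ this
      have := Finset.card_le_card_of_injOn _ hmap hinj
      have ht : (univ.filter fun j : Fin (r - 1) => (j : ℕ) ≠ 0).card = r - 2 := by
        have heq : (univ.filter fun j : Fin (r - 1) => (j : ℕ) ≠ 0)
            = univ.erase ⟨0, by omega⟩ := by
          ext j
          simp [mem_erase, Fin.ext_iff]
        rw [heq, card_erase_of_mem (mem_univ _), card_univ, Fintype.card_fin]
        omega
      omega
    have hgoodcard : 2 ≤ (univ.filter fun i : Fin r => good i).card := by
      have htot := Finset.card_filter_add_card_filter_not
        (s := (univ : Finset (Fin r))) (p := fun i => good i)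
      rw [card_univ, Fintype.card_fin] at htot
      omega
    obtain ⟨i₁, hi₁, i₂, hi₂, hne⟩ := Finset.one_lt_card.mp hgoodcard
    simp only [mem_filter, mem_univ, true_and] at hi₁ hi₂
    have hinj1 : ∀ i : Fin r, Function.Injective fun j : Fin s => f (i, j) := by
      intro i j j' h
      have := hf h
      exact (Prod.ext_iff.mp this).2
    refine ⟨univ.image fun j : Fin s => f (i₁, j), univ.image fun j : Fin s => f (i₂, j),
      ?_, ?_, ?_, ?_, ?_, ?_⟩
    · rw [card_image_of_injective _ (hinj1 i₁), card_univ, Fintype.card_fin]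
    · rw [card_image_of_injective _ (hinj1 i₂), card_univ, Fintype.card_fin]
    · rw [Finset.disjoint_left]
      rintro v hv hv'
      obtain ⟨j, -, hj⟩ := mem_image.mp hv
      obtain ⟨j', -, hj'⟩ := mem_image.mp hv'
      have : (i₁, j) = (i₂, j') := hf (hj.trans hj'.symm)
      exact hne (Prod.ext_iff.mp this).1
    · rintro x hx
      obtain ⟨j, -, hj⟩ := mem_image.mp hx
      exact ⟨hj ▸ hi₁ j, mem_image.mpr ⟨(i₁, j), mem_univ _, hj⟩⟩
    · rintro y hy
      obtain ⟨j, -, hj⟩ := mem_image.mp hy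
      exact ⟨hj ▸ hi₂ j, mem_image.mpr ⟨(i₂, j), mem_univ _, hj⟩⟩
    · intro x hx y hy
      obtain ⟨j, -, hj⟩ := mem_image.mp hx
      obtain ⟨j', -, hj'⟩ := mem_image.mp hy
      rw [← hj, ← hj']
      exact hadj _ _ hne
end
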